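/- arXiv:0708.1776 — 7 statements merged into one kernel-verified Lean document; each statement's English description precedes it below -/
import Mathlib

section
/- Let (λ_n) be a sequence of partitions, λ_n a partition of N_n, with N_n → ∞. Regard each λ_n and its conjugate λ'_n as infinite nonincreasing sequences of nonnegative integers by appending zeros. Suppose that for every i ≥ 1, λ_{n,i}/N_n → p_i, and for every j ≥ 1, λ'_{n,j}/N_n → q_j, as n → ∞. Then (Σ_i C(λ_{n,i}, 2) − Σ_j C(λ'_{n,j}, 2)) / C(N_n, 2) converges to Σ_i p_i² − Σ_j q_j² as n → ∞ (in particular both series converge). -/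
open Finset Filter Topology

private lemma sum_le_core (N m : ℕ → ℕ) (g : ℕ → ℕ → ℕ)
    (hsupp : ∀ n j, m n ≤ j → g n j = 0)
    (hsum : ∀ n, ∑ j ∈ Finset.range (m n), g n j = N n) :
    ∀ n M, ∑ j ∈ Finset.range M, g n j ≤ N n := by
  intro n M
  rcases le_total M (m n) with h | h
  · rw [← hsum n]
    exact Finset.sum_le_sum_of_subset (Finset.range_subset_range.2 h)
  · have e := Finset.sum_subset (Finset.range_subset_range.2 h)
      (fun x _ hx => hsupp n x (by simpa using hx))
    rw [← e, hsum n]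

private lemma core (N m : ℕ → ℕ) (g : ℕ → ℕ → ℕ)
    (hN : Tendsto N atTop atTop)
    (hNpos : ∀ n, 0 < N n)
    (hanti : ∀ n i j, i ≤ j → g n j ≤ g n i)
    (hsupp : ∀ n j, m n ≤ j → g n j = 0)
    (hsum : ∀ n, ∑ j ∈ Finset.range (m n), g n j = N n)
    (r : ℕ → ℝ)
    (hr : ∀ j, Tendsto (fun n => (g n j : ℝ) / (N n : ℝ)) atTop (𝓝 (r j))) :
    Summable (fun j => r j ^ 2) ∧
      Tendsto (fun n => (∑ j ∈ Finset.range (m n), ((g n j).choose 2 : ℝ)) /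
        ((N n).choose 2 : ℝ)) atTop (𝓝 (∑' j, r j ^ 2)) := by
  have hgle := sum_le_core N m g hsupp hsum
  have hNR : ∀ n, (0:ℝ) < (N n : ℝ) := fun n => by exact_mod_cast hNpos n
  have hjg : ∀ n j, (j + 1) * g n j ≤ N n := by
    intro n j
    calc (j + 1) * g n j = ∑ _i ∈ Finset.range (j+1), g n j := by
          simp [Finset.sum_const, mul_comm]
      _ ≤ ∑ i ∈ Finset.range (j+1), g n i :=
          Finset.sum_le_sum fun i hi => hanti n i j (by simpa using Nat.lt_succ_iff.1 (Finset.mem_range.1 hi))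
      _ ≤ N n := hgle n (j+1)
  have hfle : ∀ n j, (g n j : ℝ) / (N n : ℝ) ≤ 1 / ((j:ℝ) + 1) := by
    intro n j
    rw [div_le_div_iff₀ (hNR n) (by positivity)]
    have := hjg n j
    have : ((j + 1) * g n j : ℝ) ≤ (N n : ℝ) := by exact_mod_cast this
    nlinarith
  have hfnonneg : ∀ n j, (0:ℝ) ≤ (g n j : ℝ) / (N n : ℝ) := fun n j => by positivity
  have hrle : ∀ j, r j ≤ 1 / ((j:ℝ) + 1) :=
    fun j => le_of_tendsto (hr j) (Eventually.of_forall fun n => hfle n j)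
  have hrnonneg : ∀ j, 0 ≤ r j :=
    fun j => ge_of_tendsto (hr j) (Eventually.of_forall fun n => hfnonneg n j)
  have hbig : Summable (fun j : ℕ => (1 / ((j:ℝ) + 1)) ^ 2) := by
    have h := (summable_nat_add_iff 1).2 (Real.summable_one_div_nat_pow.2 (by norm_num : 1 < 2))
    apply h.congr
    intro j
    push_cast
    rw [div_pow, one_pow]
  have hsummable : Summable (fun j => r j ^ 2) := by
    apply Summable.of_nonneg_of_le (fun j => by positivity) (fun j => ?_) hbig
    exact pow_le_pow_left₀ (hrnonneg j) (hrle j) 2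
  have hfsum_le : ∀ n M, (∑ j ∈ Finset.range M, (g n j : ℝ) / (N n : ℝ)) ≤ 1 := by
    intro n M
    rw [← Finset.sum_div, div_le_one (hNR n)]
    exact_mod_cast hgle n M
  set L := ∑' j, r j ^ 2 with hL
  have hS : Tendsto (fun n => ∑ j ∈ Finset.range (m n), ((g n j : ℝ) / (N n : ℝ)) ^ 2)
      atTop (𝓝 L) := by
    rw [Metric.tendsto_atTop]
    intro ε hε
    obtain ⟨M₂, hM₂⟩ := exists_nat_one_div_lt (show (0:ℝ) < ε/3 by linarith)
    have hps := hsummable.hasSum.tendsto_sum_nat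
    rw [Metric.tendsto_atTop] at hps
    obtain ⟨M₀, hM₀⟩ := hps (ε/3) (by linarith)
    set M := max M₀ M₂ with hMdef
    have hM0 : dist (∑ j ∈ Finset.range M, r j ^ 2) L < ε/3 := hM₀ M (le_max_left _ _)
    have hMf : (1:ℝ) / ((M:ℝ) + 1) < ε/3 := by
      refine lt_of_le_of_lt ?_ hM₂
      apply one_div_le_one_div_of_le (by positivity)
      have : (M₂:ℝ) ≤ (M:ℝ) := by exact_mod_cast le_max_right M₀ M₂
      linarith
    have hfin : Tendsto (fun n => ∑ j ∈ Finset.range M, ((g n j : ℝ) / (N n : ℝ)) ^ 2)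
        atTop (𝓝 (∑ j ∈ Finset.range M, r j ^ 2)) :=
      tendsto_finset_sum _ (fun j _ => (hr j).pow 2)
    rw [Metric.tendsto_atTop] at hfin
    obtain ⟨n₀, hn₀⟩ := hfin (ε/3) (by linarith)
    refine ⟨n₀, fun n hn => ?_⟩
    set K := max (m n) M with hKdef
    have hKm : m n ≤ K := le_max_left _ _
    have hKM : M ≤ K := le_max_right _ _
    have e1 : ∑ j ∈ Finset.range (m n), ((g n j : ℝ) / (N n : ℝ)) ^ 2
        = ∑ j ∈ Finset.range K, ((g n j : ℝ) / (N n : ℝ)) ^ 2 :=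
      Finset.sum_subset (Finset.range_subset_range.2 hKm)
        (fun x _ hx => by rw [hsupp n x (by simpa using hx)]; simp)
    have split : (∑ j ∈ Finset.range M, ((g n j : ℝ) / (N n : ℝ)) ^ 2)
        + ∑ j ∈ Finset.Ico M K, ((g n j : ℝ) / (N n : ℝ)) ^ 2
        = ∑ j ∈ Finset.range K, ((g n j : ℝ) / (N n : ℝ)) ^ 2 :=
      Finset.sum_range_add_sum_Ico _ hKM
    have hmid : ∑ j ∈ Finset.Ico M K, ((g n j : ℝ) / (N n : ℝ)) ^ 2 ≤ 1 / ((M:ℝ) + 1) := by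
      calc ∑ j ∈ Finset.Ico M K, ((g n j : ℝ) / (N n : ℝ)) ^ 2
          ≤ ∑ j ∈ Finset.Ico M K, (1 / ((M:ℝ) + 1)) * ((g n j : ℝ) / (N n : ℝ)) := by
            apply Finset.sum_le_sum
            intro j hj
            have hj1 : M ≤ j := (Finset.mem_Ico.1 hj).1
            have h1 : (g n j : ℝ) / (N n : ℝ) ≤ 1 / ((M:ℝ) + 1) := by
              refine (hfle n j).trans ?_
              apply one_div_le_one_div_of_le (by positivity)
              have : (M:ℝ) ≤ (j:ℝ) := by exact_mod_cast hj1
              linarith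
            rw [sq]
            exact mul_le_mul_of_nonneg_right h1 (hfnonneg n j)
        _ = (1 / ((M:ℝ) + 1)) * ∑ j ∈ Finset.Ico M K, (g n j : ℝ) / (N n : ℝ) := by
            rw [Finset.mul_sum]
        _ ≤ (1 / ((M:ℝ) + 1)) * 1 := by
            apply mul_le_mul_of_nonneg_left ?_ (by positivity)
            refine le_trans ?_ (hfsum_le n K)
            apply Finset.sum_le_sum_of_subset_of_nonneg
            · intro x hx
              simp only [Finset.mem_Ico, Finset.mem_range] at *
              omega
            · intro x _ _; exact hfnonneg n x
        _ = 1 / ((M:ℝ) + 1) := mul_one _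
    have hmidnn : (0:ℝ) ≤ ∑ j ∈ Finset.Ico M K, ((g n j : ℝ) / (N n : ℝ)) ^ 2 :=
      Finset.sum_nonneg fun j _ => by positivity
    have t1 : dist (∑ j ∈ Finset.range (m n), ((g n j : ℝ) / (N n : ℝ)) ^ 2)
        (∑ j ∈ Finset.range M, ((g n j : ℝ) / (N n : ℝ)) ^ 2) < ε/3 := by
      rw [Real.dist_eq, e1, ← split]
      rw [abs_of_nonneg (by linarith)]
      calc _ ≤ (1:ℝ) / ((M:ℝ)+1) := by linarith
        _ < ε/3 := hMf
    have t2 := hn₀ n hn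
    calc dist (∑ j ∈ Finset.range (m n), ((g n j : ℝ) / (N n : ℝ)) ^ 2) L
        ≤ dist (∑ j ∈ Finset.range (m n), ((g n j : ℝ) / (N n : ℝ)) ^ 2)
            (∑ j ∈ Finset.range M, ((g n j : ℝ) / (N n : ℝ)) ^ 2)
          + dist (∑ j ∈ Finset.range M, ((g n j : ℝ) / (N n : ℝ)) ^ 2)
            (∑ j ∈ Finset.range M, r j ^ 2)
          + dist (∑ j ∈ Finset.range M, r j ^ 2) L := dist_triangle4 _ _ _ _
      _ < ε/3 + ε/3 + ε/3 := by exact add_lt_add (add_lt_add t1 t2) hM0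
      _ = ε := by ring
  -- assembly
  have h1N : Tendsto (fun n => (1:ℝ) / (N n : ℝ)) atTop (𝓝 0) := by
    have hcast : Tendsto (fun n => (N n : ℝ)) atTop atTop :=
      tendsto_natCast_atTop_atTop.comp hN
    have hinv : Tendsto (fun n => ((N n : ℝ))⁻¹) atTop (𝓝 0) := hcast.inv_tendsto_atTop
    simpa [one_div] using hinv
  have hcomb : Tendsto (fun n =>
      ((∑ j ∈ Finset.range (m n), ((g n j : ℝ) / (N n : ℝ)) ^ 2) - 1 / (N n : ℝ))
        / (1 - 1 / (N n : ℝ))) atTop (𝓝 ((L - 0) / (1 - 0))) :=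
    (hS.sub h1N).div (tendsto_const_nhds.sub h1N) (by norm_num)
  simp only [sub_zero, div_one] at hcomb
  refine ⟨hsummable, hcomb.congr' ?_⟩
  filter_upwards [hN.eventually_ge_atTop 2] with n hn2
  have hc : (2:ℝ) ≤ (N n : ℝ) := by exact_mod_cast hn2
  have hc0 : (N n : ℝ) ≠ 0 := by linarith
  have hc1 : (N n : ℝ) - 1 ≠ 0 := by linarith
  have hchoose : ((N n).choose 2 : ℝ) = (N n : ℝ) * ((N n : ℝ) - 1) / 2 :=
    Nat.cast_choose_two ℝ (N n)
  have hsumc : (∑ j ∈ Finset.range (m n), (g n j : ℝ)) = (N n : ℝ) := by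
    exact_mod_cast congrArg (Nat.cast : ℕ → ℝ) (hsum n)
  have hA : (∑ j ∈ Finset.range (m n), ((g n j).choose 2 : ℝ))
      = ((∑ j ∈ Finset.range (m n), (g n j : ℝ) ^ 2) - (N n : ℝ)) / 2 := by
    calc (∑ j ∈ Finset.range (m n), ((g n j).choose 2 : ℝ))
        = ∑ j ∈ Finset.range (m n), ((g n j : ℝ) ^ 2 - (g n j : ℝ)) / 2 := by
          refine Finset.sum_congr rfl fun j _ => ?_
          rw [Nat.cast_choose_two]; ring
      _ = (∑ j ∈ Finset.range (m n), ((g n j : ℝ) ^ 2 - (g n j : ℝ))) / 2 :=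
          (Finset.sum_div _ _ _).symm
      _ = ((∑ j ∈ Finset.range (m n), (g n j : ℝ) ^ 2)
            - ∑ j ∈ Finset.range (m n), (g n j : ℝ)) / 2 := by
          rw [Finset.sum_sub_distrib]
      _ = _ := by rw [hsumc]
  have hS' : (∑ j ∈ Finset.range (m n), ((g n j : ℝ) / (N n : ℝ)) ^ 2)
      = (∑ j ∈ Finset.range (m n), (g n j : ℝ) ^ 2) / (N n : ℝ) ^ 2 := by
    simp_rw [div_pow]
    rw [← Finset.sum_div]
  rw [hA, hchoose, hS']
  field_simp


/-- Let `λ_n` be a partition of `N_n` with `N_n → ∞` (written `0`-indexed as antitone functions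
`lam n : ℕ → ℕ` supported on `{0, …, k n − 1}` with `Σ_i lam n i = N n`), regarded together
with its conjugate `λ'_n` (here `λ'_{n,j} = #{i : lam n i > j}`) as infinite nonincreasing
sequences of nonnegative integers.  If `λ_{n,i}/N_n → p_i` for every `i` and
`λ'_{n,j}/N_n → q_j` for every `j`, then
`(Σ_i C(λ_{n,i},2) − Σ_j C(λ'_{n,j},2)) / C(N_n,2) → Σ_i p_i² − Σ_j q_j²`,
and in particular both series converge. -/
theorem stmt3 (N k : ℕ → ℕ) (lam : ℕ → ℕ → ℕ)
    (hN : Tendsto N atTop atTop)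
    (hNpos : ∀ n, 0 < N n)
    (hanti : ∀ n i j, i ≤ j → lam n j ≤ lam n i)
    (hsupp : ∀ n i, k n ≤ i → lam n i = 0)
    (hsum : ∀ n, ∑ i ∈ Finset.range (k n), lam n i = N n)
    (p q : ℕ → ℝ)
    (hp : ∀ i, Tendsto (fun n => (lam n i : ℝ) / (N n : ℝ)) atTop (𝓝 (p i)))
    (hq : ∀ j, Tendsto
      (fun n => ((((Finset.range (k n)).filter fun i => j < lam n i).card : ℝ)) / (N n : ℝ))
      atTop (𝓝 (q j))) :
    Summable (fun i => p i ^ 2) ∧ Summable (fun j => q j ^ 2) ∧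
      Tendsto
        (fun n =>
          ((∑ i ∈ Finset.range (k n), ((lam n i).choose 2 : ℝ)) -
              ∑ j ∈ Finset.range (N n),
                ((((Finset.range (k n)).filter fun i => j < lam n i).card.choose 2 : ℝ))) /
            ((N n).choose 2 : ℝ))
        atTop (𝓝 ((∑' i, p i ^ 2) - ∑' j, q j ^ 2)) := by
  set g2 : ℕ → ℕ → ℕ := fun n j => ((Finset.range (k n)).filter fun i => j < lam n i).card
    with hg2
  have hlamle : ∀ n i, lam n i ≤ N n := by
    intro n i
    rcases lt_or_ge i (k n) with h | h
    · rw [← hsum n]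
      exact Finset.single_le_sum (fun _ _ => Nat.zero_le _) (Finset.mem_range.2 h)
    · rw [hsupp n i h]; exact Nat.zero_le _
  have anti2 : ∀ n j j', j ≤ j' → g2 n j' ≤ g2 n j := by
    intro n j j' h
    apply Finset.card_le_card
    intro x hx
    simp only [Finset.mem_filter] at hx ⊢
    exact ⟨hx.1, lt_of_le_of_lt h hx.2⟩
  have supp2 : ∀ n j, N n ≤ j → g2 n j = 0 := by
    intro n j h
    simp only [hg2, Finset.card_eq_zero]
    rw [Finset.filter_eq_empty_iff]
    intro i _
    have := hlamle n i
    omega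
  have sum2 : ∀ n, ∑ j ∈ Finset.range (N n), g2 n j = N n := by
    intro n
    simp only [hg2]
    have : ∀ j, ((Finset.range (k n)).filter fun i => j < lam n i).card
        = ∑ i ∈ Finset.range (k n), if j < lam n i then 1 else 0 := by
      intro j; rw [Finset.card_filter]
    simp_rw [this]
    rw [Finset.sum_comm]
    have : ∀ i ∈ Finset.range (k n),
        (∑ j ∈ Finset.range (N n), if j < lam n i then 1 else 0) = lam n i := by
      intro i hi
      rw [← Finset.card_filter]
      have : (Finset.range (N n)).filter (fun j => j < lam n i) = Finset.range (lam n i) := by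
        ext x
        simp only [Finset.mem_filter, Finset.mem_range]
        have := hlamle n i
        omega
      rw [this, Finset.card_range]
    rw [Finset.sum_congr rfl this, hsum n]
  obtain ⟨hs1, ht1⟩ := core N k lam hN hNpos hanti hsupp hsum p hp
  obtain ⟨hs2, ht2⟩ := core N (fun n => N n) g2 hN hNpos anti2 supp2 sum2 q hq
  refine ⟨hs1, hs2, ?_⟩
  have := ht1.sub ht2
  simpa [sub_div] using this
end

section
/- Let λ = (λ_1 ≥ λ_2 ≥ … ≥ λ_k > 0) be a partition of N with exactly k parts, and for each cell (i,j) of its Young diagram let h_{i,j} = (λ_i − j) + (λ'_j − i) + 1 be its hooklength. Then ∏_{(i,j)∈λ} h_{i,j} · ∏_{1≤i<j≤k} (λ_i − λ_j − i + j) = ∏_{i=1}^{k} (λ_i + k − i)!. Equivalently, the hooklength formula N!/∏_{(i,j)∈λ} h_{i,j} and the determinant-type formula N! ∏_{1≤i<j≤k}(λ_i − λ_j − i + j) / ∏_{i=1}^k (λ_i + k − i)! give the same value. -/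
open Finset

lemma row_lemma (k i : ℕ) (hik : i < k) (lam : ℕ → ℕ)
    (hanti : ∀ a b, a ≤ b → lam b ≤ lam a)
    (c : ℕ → ℕ)
    (hc : ∀ l j, l < k → (l < c j ↔ j < lam l))
    (hck : ∀ j, c j ≤ k)
    (hcanti : ∀ a b, a ≤ b → c b ≤ c a) :
    (∏ j ∈ Finset.range (lam i), ((lam i - (j + 1)) + (c j - (i + 1)) + 1))
      * ∏ j ∈ Finset.Ioo i k, (lam i + j - (lam j + i))
    = (lam i + k - (i + 1)).factorial := by
  set m := lam i + k - (i + 1) with hm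
  set f : ℕ → ℕ := fun j => (lam i - (j + 1)) + (c j - (i + 1)) + 1 with hf
  set g : ℕ → ℕ := fun j => lam i + j - (lam j + i) with hg
  have key : ∀ j, j < lam i → i < c j := fun j hj => (hc i j hik).2 hj
  have hfval : ∀ j, j < lam i → f j + j + i + 1 = lam i + c j := by
    intro j hj
    have := key j hj
    simp only [hf]
    omega
  have hgval : ∀ j, i < j → j < k → g j + lam j + i = lam i + j := by
    intro j h1 h2
    have := hanti i j h1.le
    simp only [hg]
    omega
  have hfinj : Set.InjOn f (Finset.range (lam i)) := by
    intro a ha b hb hab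
    simp only [Finset.coe_range, Set.mem_Iio] at ha hb
    have e1 := hfval a ha
    have e2 := hfval b hb
    rcases lt_trichotomy a b with h | h | h
    · have := hcanti a b h.le; omega
    · exact h
    · have := hcanti b a h.le; omega
  have hginj : Set.InjOn g (Finset.Ioo i k) := by
    intro a ha b hb hab
    simp only [Finset.coe_Ioo, Set.mem_Ioo] at ha hb
    have e1 := hgval a ha.1 ha.2
    have e2 := hgval b hb.1 hb.2
    rcases lt_trichotomy a b with h | h | h
    · have := hanti a b h.le; omega
    · exact h
    · have := hanti b a h.le; omega
  set S1 := (Finset.range (lam i)).image f with hS1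
  set S2 := (Finset.Ioo i k).image g with hS2
  have hdisj : Disjoint S1 S2 := by
    rw [Finset.disjoint_left]
    rintro x hx1 hx2
    simp only [hS1, hS2, Finset.mem_image, Finset.mem_range, Finset.mem_Ioo] at hx1 hx2
    obtain ⟨a, ha, rfl⟩ := hx1
    obtain ⟨b, hb, heq⟩ := hx2
    have e1 := hfval a ha
    have e2 := hgval b hb.1 hb.2
    have hiff := hc b a hb.2
    have := hanti i b hb.1.le
    omega
  have hsub : S1 ∪ S2 ⊆ Finset.Icc 1 m := by
    intro x hx
    simp only [S1, S2, Finset.mem_union, Finset.mem_image, Finset.mem_range,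
      Finset.mem_Ioo] at hx
    rw [Finset.mem_Icc]
    rcases hx with ⟨a, ha, rfl⟩ | ⟨a, ha, rfl⟩
    · have e1 := hfval a ha
      have h2 := hck a
      have h3 := key a ha
      omega
    · have e1 := hgval a ha.1 ha.2
      have := hanti i a ha.1.le
      omega
  have hcard : (S1 ∪ S2).card = m := by
    rw [Finset.card_union_of_disjoint hdisj, hS1, hS2,
      Finset.card_image_of_injOn hfinj, Finset.card_image_of_injOn hginj,
      Finset.card_range, Nat.card_Ioo]
    omega
  have heqset : S1 ∪ S2 = Finset.Icc 1 m := by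
    apply Finset.eq_of_subset_of_card_le hsub
    rw [hcard, Nat.card_Icc]
    omega
  have hprod : ∏ x ∈ S1 ∪ S2, x = m.factorial := by
    rw [heqset]
    rw [← Finset.Ico_add_one_right_eq_Icc, Finset.prod_Ico_eq_prod_range,
      ← Finset.prod_range_add_one_eq_factorial]
    exact Finset.prod_congr rfl fun x _ => by omega
  rw [Finset.prod_union hdisj, hS1, hS2,
    Finset.prod_image hfinj, Finset.prod_image hginj] at hprod
  exact hprod

/-- For a partition `λ = (λ₁ ≥ … ≥ λ_k > 0)` of `N` with exactly `k` parts (written `0`-indexed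
as `lam : ℕ → ℕ`), with hooklengths `h_{i,j} = (λ_i − j) + (λ'_j − i) + 1` (here `0`-indexed:
the cell `(i,j)` with `j < lam i` has hooklength `(lam i − (j+1)) + (λ'_j − (i+1)) + 1`, where
`λ'_j = #{i : lam i > j}`), one has
`∏_{(i,j)∈λ} h_{i,j} · ∏_{i<j≤k} (λ_i − λ_j − i + j) = ∏_{i=1}^{k} (λ_i + k − i)!`;
equivalently the hooklength formula and the determinant-type formula for `f^λ` agree. -/
theorem stmt4 (N k : ℕ) (hk : 0 < k) (lam : ℕ → ℕ)
    (hanti : ∀ i j, i ≤ j → lam j ≤ lam i)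
    (hpos : ∀ i, i < k → 0 < lam i)
    (hzero : ∀ i, k ≤ i → lam i = 0)
    (hsum : ∑ i ∈ Finset.range k, lam i = N) :
    (∏ i ∈ Finset.range k, ∏ j ∈ Finset.range (lam i),
        ((lam i - (j + 1)) + (((Finset.range k).filter fun i' => j < lam i').card - (i + 1)) + 1))
      * ∏ i ∈ Finset.range k, ∏ j ∈ Finset.Ioo i k, (lam i + j - (lam j + i))
    = ∏ i ∈ Finset.range k, (lam i + k - (i + 1)).factorial := by
  set c : ℕ → ℕ := fun j => ((Finset.range k).filter fun i' => j < lam i').card with hcdef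
  have hc : ∀ l j, l < k → (l < c j ↔ j < lam l) := by
    intro l j hl
    constructor
    · intro h
      by_contra hcon
      push_neg at hcon
      have hsub : ((Finset.range k).filter fun i' => j < lam i') ⊆ Finset.range l := by
        intro x hx
        simp only [Finset.mem_filter, Finset.mem_range] at hx ⊢
        by_contra hxl
        push_neg at hxl
        have := hanti l x hxl
        omega
      have := Finset.card_le_card hsub
      simp only [Finset.card_range] at this
      simp only [hcdef] at h
      omega
    · intro h
      have hsub : Finset.range (l + 1) ⊆ (Finset.range k).filter fun i' => j < lam i' := by
        intro x hx
        simp only [Finset.mem_range] at hx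
        simp only [Finset.mem_filter, Finset.mem_range]
        have := hanti x l (by omega)
        omega
      have := Finset.card_le_card hsub
      simp only [Finset.card_range] at this
      simp only [hcdef]
      omega
  have hck : ∀ j, c j ≤ k := by
    intro j
    simpa using (Finset.card_filter_le (Finset.range k) fun i' => j < lam i')
  have hcanti : ∀ a b, a ≤ b → c b ≤ c a := by
    intro a b hab
    apply Finset.card_le_card
    intro x hx
    simp only [Finset.mem_filter] at hx ⊢
    exact ⟨hx.1, by omega⟩
  rw [← Finset.prod_mul_distrib]
  exact Finset.prod_congr rfl fun i hi =>
    row_lemma k i (Finset.mem_range.mp hi) lam hanti c hc hck hcanti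
end

section
/- Let (λ_n) be a sequence of partitions, λ_n a partition of N_n, with N_n → ∞, and set c_n = Σ_{(i,j)∈λ_n} (j − i) and s_n = Σ_{(i,j)∈λ_n} (j − i)². If c_n / C(N_n, 2) → θ as n → ∞, then (4 (N_n − 4)! / N_n!) · ( c_n² − 3 s_n + 2 C(N_n, 2) ) → θ² as n → ∞. -/
open Finset Filter Topology

private lemma cell_lt (lam : ℕ → ℕ) (k N : ℕ)
    (hanti : ∀ i j, i ≤ j → lam j ≤ lam i)
    (hsum : ∑ i ∈ Finset.range k, lam i = N) :
    ∀ i < k, ∀ j < lam i, i < N ∧ j < N := by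
  intro i hi j hj
  have h1 : i + 1 ≤ ∑ t ∈ Finset.range (i+1), lam t := by
    calc i + 1 = ∑ _t ∈ Finset.range (i+1), 1 := by simp
    _ ≤ ∑ t ∈ Finset.range (i+1), lam t := by
        apply Finset.sum_le_sum
        intro t ht
        have := hanti t i (Nat.lt_succ_iff.mp (Finset.mem_range.mp ht))
        omega
  have h2 : ∑ t ∈ Finset.range (i+1), lam t ≤ N := by
    rw [← hsum]
    exact Finset.sum_le_sum_of_subset (Finset.range_subset_range.mpr hi)
  have h3 : lam 0 ≤ N := by
    rw [← hsum]
    exact Finset.single_le_sum (fun t _ => Nat.zero_le _)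
      (Finset.mem_range.mpr (by omega))
  have := hanti 0 i (Nat.zero_le i)
  omega

private lemma sum_bound (lam : ℕ → ℕ) (k N : ℕ)
    (hsum : ∑ i ∈ Finset.range k, lam i = N)
    (B : ℤ) (T : ℕ → ℕ → ℤ)
    (hT : ∀ i < k, ∀ j < lam i, |T i j| ≤ B) :
    |∑ i ∈ Finset.range k, ∑ j ∈ Finset.range (lam i), T i j| ≤ B * N := by
  calc |∑ i ∈ Finset.range k, ∑ j ∈ Finset.range (lam i), T i j|
      ≤ ∑ i ∈ Finset.range k, |∑ j ∈ Finset.range (lam i), T i j| :=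
        Finset.abs_sum_le_sum_abs _ _
    _ ≤ ∑ i ∈ Finset.range k, ∑ j ∈ Finset.range (lam i), |T i j| :=
        Finset.sum_le_sum fun i _ => Finset.abs_sum_le_sum_abs _ _
    _ ≤ ∑ i ∈ Finset.range k, ∑ _j ∈ Finset.range (lam i), B := by
        apply Finset.sum_le_sum; intro i hi
        apply Finset.sum_le_sum; intro j hj
        exact hT i (Finset.mem_range.mp hi) j (Finset.mem_range.mp hj)
    _ = ∑ i ∈ Finset.range k, (lam i : ℤ) * B := by
        simp [mul_comm]
    _ = B * N := by
        rw [← Finset.sum_mul, ← Nat.cast_sum, hsum]; ring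

set_option maxHeartbeats 1000000 in
/-- Let `λ_n` be a partition of `N_n` with `N_n → ∞` (written `0`-indexed as antitone functions
`lam n : ℕ → ℕ` supported on `{0, …, k n − 1}` with `Σ_i lam n i = N n`), and set
`c_n = Σ_{(i,j)∈λ_n} (j−i)` and `s_n = Σ_{(i,j)∈λ_n} (j−i)²`.  If `c_n / C(N_n,2) → θ`, then
`(4 (N_n−4)! / N_n!) · (c_n² − 3 s_n + 2 C(N_n,2)) → θ²`. -/
theorem stmt5 (N k : ℕ → ℕ) (lam : ℕ → ℕ → ℕ)
    (hN : Tendsto N atTop atTop)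
    (hNpos : ∀ n, 0 < N n)
    (hanti : ∀ n i j, i ≤ j → lam n j ≤ lam n i)
    (hsupp : ∀ n i, k n ≤ i → lam n i = 0)
    (hsum : ∀ n, ∑ i ∈ Finset.range (k n), lam n i = N n)
    (c s : ℕ → ℤ)
    (hc : ∀ n, c n = ∑ i ∈ Finset.range (k n), ∑ j ∈ Finset.range (lam n i),
      ((j : ℤ) - (i : ℤ)))
    (hs : ∀ n, s n = ∑ i ∈ Finset.range (k n), ∑ j ∈ Finset.range (lam n i),
      ((j : ℤ) - (i : ℤ)) ^ 2)
    (θ : ℝ)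
    (hθ : Tendsto (fun n => (c n : ℝ) / ((N n).choose 2 : ℝ)) atTop (𝓝 θ)) :
    Tendsto
      (fun n =>
        (4 * ((N n - 4).factorial : ℝ) / ((N n).factorial : ℝ)) *
          ((c n : ℝ) ^ 2 - 3 * (s n : ℝ) + 2 * ((N n).choose 2 : ℝ)))
      atTop (𝓝 (θ ^ 2)) := by
  set F : ℕ → ℝ := fun n =>
    (4 * ((N n - 4).factorial : ℝ) / ((N n).factorial : ℝ)) *
      ((c n : ℝ) ^ 2 - 3 * (s n : ℝ) + 2 * ((N n).choose 2 : ℝ)) with hF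
  set G : ℕ → ℝ := fun n =>
    ((N n : ℝ) * ((N n : ℝ) - 1)) / (((N n : ℝ) - 2) * ((N n : ℝ) - 3)) with hGdef
  set M : ℕ → ℝ := fun n =>
    ((c n : ℝ) / ((N n).choose 2 : ℝ)) ^ 2 * G n with hMdef
  have hN8 : ∀ᶠ n in atTop, 8 ≤ N n := hN.eventually_ge_atTop 8
  -- bounds on c and s
  have hcb : ∀ n, |(c n : ℝ)| ≤ (N n : ℝ) ^ 2 := by
    intro n
    have : |c n| ≤ (N n : ℤ) * (N n : ℤ) := by
      rw [hc n]
      apply sum_bound (lam n) (k n) (N n) (hsum n)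
      intro i hi j hj
      obtain ⟨h1, h2⟩ := cell_lt (lam n) (k n) (N n) (hanti n) (hsum n) i hi j hj
      rw [abs_le]; constructor <;> [skip; skip] <;> push_cast <;> omega
    calc |(c n : ℝ)| = ((|c n| : ℤ) : ℝ) := by rw [Int.cast_abs]
    _ ≤ (((N n : ℤ) * (N n : ℤ) : ℤ) : ℝ) := by exact_mod_cast this
    _ = (N n : ℝ) ^ 2 := by push_cast; ring
  have hsb : ∀ n, |(s n : ℝ)| ≤ (N n : ℝ) ^ 3 := by
    intro n
    have : |s n| ≤ (N n : ℤ) ^ 2 * (N n : ℤ) := by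
      rw [hs n]
      apply sum_bound (lam n) (k n) (N n) (hsum n)
      intro i hi j hj
      obtain ⟨h1, h2⟩ := cell_lt (lam n) (k n) (N n) (hanti n) (hsum n) i hi j hj
      have h3 : |((j : ℤ) - (i : ℤ))| ≤ (N n : ℤ) := by
        rw [abs_le]; constructor <;> push_cast <;> omega
      calc |((j : ℤ) - (i : ℤ)) ^ 2| = |((j : ℤ) - (i : ℤ))| ^ 2 := by
            rw [abs_pow]
      _ ≤ (N n : ℤ) ^ 2 := by
            apply pow_le_pow_left₀ (abs_nonneg _) h3
    calc |(s n : ℝ)| = ((|s n| : ℤ) : ℝ) := by rw [Int.cast_abs]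
    _ ≤ (((N n : ℤ) ^ 2 * (N n : ℤ) : ℤ) : ℝ) := by exact_mod_cast this
    _ = (N n : ℝ) ^ 3 := by push_cast; ring
  -- G tends to 1
  have hG1 : Tendsto G atTop (𝓝 1) := by
    have hub : Tendsto (fun n => 1 + 16 / (N n : ℝ)) atTop (𝓝 (1 + 0)) :=
      tendsto_const_nhds.add ((tendsto_const_div_atTop_nhds_zero_nat 16).comp hN)
    rw [add_zero] at hub
    apply tendsto_of_tendsto_of_tendsto_of_le_of_le' tendsto_const_nhds hub
    · filter_upwards [hN8] with n hn
      obtain ⟨m, hm⟩ : ∃ m, N n = m + 4 := ⟨N n - 4, by omega⟩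
      have hm4 : (4 : ℝ) ≤ (m : ℝ) := by
        have : 4 ≤ m := by omega
        exact_mod_cast this
      simp only [hGdef, hm]
      push_cast
      rw [le_div_iff₀ (by nlinarith)]
      nlinarith
    · filter_upwards [hN8] with n hn
      obtain ⟨m, hm⟩ : ∃ m, N n = m + 4 := ⟨N n - 4, by omega⟩
      have hm4 : (4 : ℝ) ≤ (m : ℝ) := by
        have : 4 ≤ m := by omega
        exact_mod_cast this
      simp only [hGdef, hm]
      push_cast
      have h20 : 1 + 16/((m:ℝ)+4) = ((m:ℝ)+20)/((m:ℝ)+4) := by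
        field_simp
        ring
      rw [h20, div_le_div_iff₀ (by nlinarith) (by positivity)]
      nlinarith
  have hM : Tendsto M atTop (𝓝 (θ ^ 2 * 1)) := (hθ.pow 2).mul hG1
  rw [mul_one] at hM
  -- error tends to 0
  have hbound : ∀ᶠ n in atTop, ‖F n - M n‖ ≤ 128 / (N n : ℝ) := by
    filter_upwards [hN8] with n hn
    obtain ⟨m, hm⟩ : ∃ m, N n = m + 4 := ⟨N n - 4, by omega⟩
    have hm4 : (4 : ℝ) ≤ (m : ℝ) := by
      have : 4 ≤ m := by omega
      exact_mod_cast this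
    have hme : N n - 4 = m := by omega
    have hfac : ((N n).factorial : ℝ)
        = ((m:ℝ)+4)*((m:ℝ)+3)*((m:ℝ)+2)*((m:ℝ)+1)*(m.factorial : ℝ) := by
      rw [hm]
      have e4 : (m+4).factorial = (m+4) * (m+3).factorial := Nat.factorial_succ (m+3)
      have e3 : (m+3).factorial = (m+3) * (m+2).factorial := Nat.factorial_succ (m+2)
      have e2 : (m+2).factorial = (m+2) * (m+1).factorial := Nat.factorial_succ (m+1)
      have e1 : (m+1).factorial = (m+1) * m.factorial := Nat.factorial_succ m
      rw [e4, e3, e2, e1]; push_cast; ring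
    have hCo : (((N n).choose 2 : ℕ) : ℝ) = ((m:ℝ)+4)*((m:ℝ)+3)/2 := by
      rw [Nat.cast_choose_two, hm]; push_cast; ring
    have hGn : G n = (((m:ℝ)+4)*((m:ℝ)+3)) / ((((m:ℝ)+2))*(((m:ℝ)+1))) := by
      simp only [hGdef, hm]; push_cast; ring_nf
    have hfacpos : (0:ℝ) < (m.factorial : ℝ) := by positivity
    have hCopos : (0:ℝ) < ((m:ℝ)+4)*((m:ℝ)+3)/2 := by positivity
    set P : ℝ := ((m:ℝ)+4)*((m:ℝ)+3)*((m:ℝ)+2)*((m:ℝ)+1) with hP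
    have hPpos : 0 < P := by rw [hP]; positivity
    have key : F n - M n
        = (2 * (((N n).choose 2 : ℕ) : ℝ) - 3 * (s n : ℝ)) * (4 / P) := by
      simp only [hF, hMdef, hme, hfac, hGn, hCo, hP]
      field_simp
      ring
    rw [key, Real.norm_eq_abs, abs_mul]
    have h1 : |2 * (((N n).choose 2 : ℕ) : ℝ) - 3 * (s n : ℝ)| ≤ 4 * (N n : ℝ)^3 := by
      have hc2 : (((N n).choose 2 : ℕ) : ℝ) ≤ (N n : ℝ)^2 / 2 := by
        rw [hCo, hm]; push_cast; nlinarith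
      have hsn := hsb n
      have hNr : (1:ℝ) ≤ (N n : ℝ) := by
        have : 1 ≤ N n := by omega
        exact_mod_cast this
      have t1 : |2 * (((N n).choose 2 : ℕ) : ℝ) - 3 * (s n : ℝ)|
          ≤ |2 * (((N n).choose 2 : ℕ) : ℝ)| + |3 * (s n : ℝ)| := abs_sub _ _
      rw [abs_mul, abs_mul,
        abs_of_nonneg (Nat.cast_nonneg ((N n).choose 2) : (0:ℝ) ≤ _)] at t1
      norm_num at t1
      have hN2 : (N n : ℝ)^2 ≤ (N n : ℝ)^3 := by nlinarith [hNr]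
      nlinarith [abs_nonneg (s n : ℝ)]
    have h2 : |4 / P| = 4 / P := abs_of_pos (by positivity)
    rw [h2]
    have hNm : (N n : ℝ) = (m:ℝ) + 4 := by rw [hm]; push_cast; ring
    calc |2 * (((N n).choose 2 : ℕ) : ℝ) - 3 * (s n : ℝ)| * (4 / P)
        ≤ (4 * (N n : ℝ)^3) * (4 / P) := by
          apply mul_le_mul_of_nonneg_right h1 (by positivity)
    _ = 16 * (N n : ℝ)^3 / P := by ring
    _ ≤ 128 / (N n : ℝ) := by
          rw [hNm, hP, div_le_div_iff₀ (by positivity) (by positivity)]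
          have a1 : (m:ℝ)+4 ≤ 2*((m:ℝ)+1) := by linarith
          have a2 : (m:ℝ)+4 ≤ 2*((m:ℝ)+2) := by linarith
          have a3 : (m:ℝ)+4 ≤ 2*((m:ℝ)+3) := by linarith
          have p : ((m:ℝ)+4)^3 ≤ 8*(((m:ℝ)+3)*(((m:ℝ)+2)*((m:ℝ)+1))) := by
            calc ((m:ℝ)+4)^3 = ((m:ℝ)+4)*(((m:ℝ)+4)*((m:ℝ)+4)) := by ring
            _ ≤ (2*((m:ℝ)+3))*((2*((m:ℝ)+2))*(2*((m:ℝ)+1))) := by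
                apply mul_le_mul a3 ?_ (by positivity) (by positivity)
                apply mul_le_mul a2 a1 (by positivity) (by positivity)
            _ = 8*(((m:ℝ)+3)*(((m:ℝ)+2)*((m:ℝ)+1))) := by ring
          nlinarith [p, show (0:ℝ) ≤ (m:ℝ)+4 by positivity]
  have hE : Tendsto (fun n => F n - M n) atTop (𝓝 0) :=
    squeeze_zero_norm' hbound ((tendsto_const_div_atTop_nhds_zero_nat 128).comp hN)
  have : Tendsto (fun n => M n + (F n - M n)) atTop (𝓝 (θ ^ 2 + 0)) := hM.add hE
  rw [add_zero] at this
  simpa using this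
end

section
/- For all real numbers t and x, the series Σ_{n=0}^{∞} (t^n / n!) He_n(x) converges and equals exp(t x − t²/2), where He_n is the probabilists' Hermite polynomial. -/
open Finset Polynomial
open scoped Nat

private lemma fact_two_mul (m : ℕ) :
    (2 * m).factorial = 2 ^ m * m.factorial * (2 * m - 1)‼ := by
  cases m with
  | zero => rfl
  | succ m =>
      have h1 : 2 * (m + 1) = (2 * m + 1) + 1 := by ring
      have h2 : 2 * (m + 1) - 1 = 2 * m + 1 := by omega
      rw [h1, Nat.factorial_eq_mul_doubleFactorial, ← h1, Nat.doubleFactorial_two_mul, h2]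

private lemma key (t x : ℝ) (N : ℕ) :
    ∑ kl ∈ antidiagonal N,
        (t * x) ^ kl.1 / kl.1.factorial *
          (if Even kl.2 then ((-(t ^ 2) / 2) ^ (kl.2 / 2) / (kl.2 / 2).factorial : ℝ) else 0)
      = t ^ N / N.factorial * Polynomial.aeval x (Polynomial.hermite N) := by
  have hdeg : (hermite N : Polynomial ℤ).natDegree = N := Polynomial.natDegree_hermite
  have haev : (Polynomial.aeval x (Polynomial.hermite N) : ℝ)
      = ∑ k ∈ range (N + 1), ((hermite N).coeff k : ℝ) * x ^ k := by
    rw [Polynomial.aeval_def, Polynomial.eval₂_eq_sum_range]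
    simp [hdeg, zsmul_eq_mul]
  rw [haev, Finset.mul_sum, Finset.Nat.sum_antidiagonal_eq_sum_range_succ_mk]
  refine Finset.sum_congr rfl fun k hk => ?_
  dsimp only
  have hkN : k ≤ N := by simpa using Nat.lt_succ_iff.mp (Finset.mem_range.mp hk)
  have heven : Even (N - k) ↔ Even (N + k) := by
    rw [Nat.even_sub hkN, Nat.even_add]
  rw [Polynomial.coeff_hermite]
  by_cases h : Even (N + k)
  · have hek : Even (N - k) := heven.mpr h
    obtain ⟨m, hm⟩ := hek
    have hm' : N - k = 2 * m := by omega
    have hN : N = k + 2 * m := by omega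
    rw [if_pos h, if_pos (heven.mpr h)]
    subst hN
    have hdiv : (k + 2 * m - k) / 2 = m := by omega
    have hsub : k + 2 * m - k - 1 = 2 * m - 1 := by omega
    have hchooseN : (k + 2 * m).choose k * k.factorial * (2 * m).factorial
        = (k + 2 * m).factorial := by
      have := Nat.choose_mul_factorial_mul_factorial (show k ≤ k + 2 * m by omega)
      simpa using this
    have hchoose : ((k + 2 * m).choose k : ℝ) * k.factorial * (2 * m).factorial
        = (k + 2 * m).factorial := by exact_mod_cast hchooseN
    have hfact : ((2 * m).factorial : ℝ)
        = 2 ^ m * m.factorial * ((2 * m - 1)‼ : ℝ) := by exact_mod_cast fact_two_mul m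
    have h2m : ((k + 2 * m).factorial : ℝ)
        = ((k + 2 * m).choose k : ℝ) * k.factorial * (2 ^ m * m.factorial * ((2 * m - 1)‼ : ℝ)) := by
      rw [← hfact, hchoose]
    push_cast
    rw [hdiv, hsub, h2m]
    have hk0 : (k.factorial : ℝ) ≠ 0 := by positivity
    have hm0 : (m.factorial : ℝ) ≠ 0 := by positivity
    have hd0 : (((2 * m - 1)‼ : ℕ) : ℝ) ≠ 0 := by
      exact_mod_cast (Nat.doubleFactorial_pos _).ne'
    have hc0 : (((k + 2 * m).choose k : ℕ) : ℝ) ≠ 0 := by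
      exact_mod_cast (Nat.choose_pos (show k ≤ k + 2 * m by omega)).ne'
    field_simp
    have h2 : ((-1 / 2 : ℝ)) ^ m * 2 ^ m = (-1) ^ m := by rw [← mul_pow]; norm_num
    linear_combination (t ^ k * t ^ (m * 2) * x ^ k) * h2
  · have h' : ¬ Even (N - k) := fun he => h (heven.mp he)
    simp [h, h']

/-- For all real `t` and `x`, the series `Σ_{n=0}^∞ (tⁿ/n!) Heₙ(x)` converges and equals
`exp(t x − t²/2)`, where `Heₙ` is the probabilists' Hermite polynomial. -/
theorem stmt9 (t x : ℝ) :
    HasSum (fun n : ℕ => t ^ n / n.factorial * Polynomial.aeval x (Polynomial.hermite n))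
      (Real.exp (t * x - t ^ 2 / 2)) := by
  set f : ℕ → ℝ := fun k => (t * x) ^ k / k.factorial with hfdef
  set g : ℕ → ℝ := fun j =>
    if Even j then ((-(t ^ 2) / 2) ^ (j / 2) / (j / 2).factorial : ℝ) else 0 with hgdef
  have hinj : Function.Injective (fun m : ℕ => 2 * m) := fun a b h => by have : 2 * a = 2 * b := h; omega
  have hrange : ∀ j, j ∉ Set.range (fun m : ℕ => 2 * m) → g j = 0 := by
    intro j hj
    have : ¬ Even j := by
      intro ⟨r, hr⟩; exact hj ⟨r, show 2 * r = j by omega⟩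
    simp [hgdef, this]
  have hcomp : (g ∘ fun m : ℕ => 2 * m) = fun m : ℕ => (-(t ^ 2) / 2) ^ m / m.factorial := by
    funext m
    simp [hgdef, Function.comp, Nat.mul_div_cancel_left m (by norm_num : 0 < 2),
      even_two_mul m]
  have hf : HasSum f (Real.exp (t * x)) := by
    rw [Real.exp_eq_exp_ℝ]; exact NormedSpace.expSeries_div_hasSum_exp (t * x)
  have hg : HasSum g (Real.exp (-(t ^ 2) / 2)) := by
    rw [← Function.Injective.hasSum_iff hinj hrange, hcomp, Real.exp_eq_exp_ℝ]
    exact NormedSpace.expSeries_div_hasSum_exp (-(t ^ 2) / 2)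
  have hfn : Summable fun k => ‖f k‖ := NormedSpace.norm_expSeries_div_summable (t * x)
  have hgn : Summable fun j => ‖g j‖ := by
    rw [← Function.Injective.summable_iff hinj (fun j hj => by rw [hrange j hj, norm_zero])]
    have : ((fun j => ‖g j‖) ∘ fun m : ℕ => 2 * m)
        = fun m : ℕ => ‖(-(t ^ 2) / 2) ^ m / (m.factorial : ℝ)‖ := by
      funext m
      simp only [Function.comp]
      rw [show g (2 * m) = (-(t ^ 2) / 2) ^ m / m.factorial from congrFun hcomp m]
    rw [this]
    exact NormedSpace.norm_expSeries_div_summable (-(t ^ 2) / 2)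
  have hsum : Summable fun n => ∑ kl ∈ antidiagonal n, f kl.1 * g kl.2 :=
    (summable_norm_sum_mul_antidiagonal_of_summable_norm hfn hgn).of_norm
  have heq := tsum_mul_tsum_eq_tsum_sum_antidiagonal_of_summable_norm hfn hgn
  have hS : HasSum (fun n => ∑ kl ∈ antidiagonal n, f kl.1 * g kl.2)
      (Real.exp (t * x) * Real.exp (-(t ^ 2) / 2)) := by
    rw [← hf.tsum_eq, ← hg.tsum_eq, heq]
    exact hsum.hasSum
  have hfun : (fun n => ∑ kl ∈ antidiagonal n, f kl.1 * g kl.2)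
      = fun n : ℕ => t ^ n / n.factorial * Polynomial.aeval x (Polynomial.hermite n) :=
    funext fun n => key t x n
  rw [hfun, ← Real.exp_add] at hS
  convert hS using 2
  ring
end

section
/- Let γ be the standard Gaussian measure on ℝ. For all nonnegative integers m and n, ∫ He_m(x) He_n(x) dγ(x) equals n! if m = n and equals 0 otherwise, where He_n is the probabilists' Hermite polynomial. -/
open MeasureTheory ProbabilityTheory Polynomial Real
open scoped ENNReal NNReal

noncomputable def Hr (n : ℕ) : Polynomial ℝ := (Polynomial.hermite n).map (Int.castRingHom ℝ)

lemma Hr_zero : Hr 0 = 1 := by simp [Hr]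

lemma Hr_succ (n : ℕ) : Hr (n + 1) = X * Hr n - derivative (Hr n) := by
  simp [Hr, Polynomial.hermite_succ, Polynomial.derivative_map]

lemma aeval_eq_Hr (n : ℕ) (x : ℝ) : aeval x (Polynomial.hermite n) = (Hr n).eval x := by
  rw [Hr, eval_map, aeval_def]
  norm_num [algebraMap_int_eq]

lemma derivative_Hr_succ (n : ℕ) : derivative (Hr (n + 1)) = (n + 1) • Hr n := by
  induction n with
  | zero => simp [Hr_succ, Hr_zero]
  | succ k ih =>
      rw [Hr_succ (k+1), derivative_sub, derivative_mul, derivative_X, one_mul, ih,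
        map_nsmul, mul_smul_comm, Hr_succ k]
      simp only [nsmul_eq_mul]
      push_cast
      ring

noncomputable def G (x : ℝ) : ℝ := Real.exp (-x ^ 2 / 2)

lemma integrable_pow_G (n : ℕ) : Integrable (fun x : ℝ => x ^ n * G x) := by
  have h := integrable_rpow_mul_exp_neg_mul_sq (b := 1/2) (by norm_num) (s := n)
    (lt_of_lt_of_le neg_one_lt_zero (Nat.cast_nonneg n))
  have h2 : (fun x : ℝ => x ^ (n : ℝ) * Real.exp (-(1/2) * x ^ 2))
      = fun x => x ^ n * G x := by
    funext x
    rw [Real.rpow_natCast, G]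
    congr 1
    ring
  rwa [h2] at h

lemma integrable_poly_G (p : Polynomial ℝ) : Integrable (fun x : ℝ => p.eval x * G x) := by
  induction p using Polynomial.induction_on' with
  | add p q hp hq => simpa [add_mul, Pi.add_def] using hp.add hq
  | monomial n a =>
      simpa [eval_monomial, mul_assoc] using (integrable_pow_G n).const_mul a

lemma hasDerivAt_G (x : ℝ) : HasDerivAt G (-x * G x) x := by
  have h : HasDerivAt (fun x : ℝ => -x ^ 2 / 2) (-x) x := by
    have := ((hasDerivAt_pow 2 x).neg).div_const 2
    simpa using this.congr_deriv (by push_cast; ring)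
  have h2 := h.exp
  have h3 : G = fun x : ℝ => Real.exp (-x ^ 2 / 2) := rfl
  rw [h3]
  convert h2 using 1
  ring

lemma ibp (p : Polynomial ℝ) :
    ∫ x : ℝ, (X * p).eval x * G x = ∫ x : ℝ, (derivative p).eval x * G x := by
  have key : ∫ x : ℝ, (derivative p - X * p).eval x * G x = 0 := by
    apply integral_eq_zero_of_hasDerivAt_of_integrable
      (f := fun x => p.eval x * G x) _ (integrable_poly_G _) (integrable_poly_G p)
    intro x
    have := (p.hasDerivAt x).fun_mul (hasDerivAt_G x)
    refine this.congr_deriv ?_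
    simp [eval_mul]
    ring
  have h2 := integral_sub (integrable_poly_G (derivative p)) (integrable_poly_G (X * p))
  simp only [eval_sub] at key
  simp only [sub_mul] at key
  rw [h2] at key
  linarith

lemma step (p : Polynomial ℝ) (n : ℕ) :
    ∫ x : ℝ, (p * Hr (n + 1)).eval x * G x
      = ∫ x : ℝ, (derivative p * Hr n).eval x * G x := by
  have h1 : p * Hr (n + 1) = X * (p * Hr n) - p * derivative (Hr n) := by
    rw [Hr_succ]; ring
  have h2 : derivative (p * Hr n) = derivative p * Hr n + p * derivative (Hr n) := derivative_mul
  calc ∫ x : ℝ, (p * Hr (n + 1)).eval x * G x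
      = ∫ x : ℝ, ((X * (p * Hr n)).eval x * G x - (p * derivative (Hr n)).eval x * G x) := by
        rw [h1]; congr 1; ext x; simp [sub_mul]
    _ = (∫ x : ℝ, (X * (p * Hr n)).eval x * G x) - ∫ x : ℝ, (p * derivative (Hr n)).eval x * G x :=
        integral_sub (integrable_poly_G _) (integrable_poly_G _)
    _ = (∫ x : ℝ, (derivative (p * Hr n)).eval x * G x)
          - ∫ x : ℝ, (p * derivative (Hr n)).eval x * G x := by rw [ibp]
    _ = ∫ x : ℝ, (derivative p * Hr n).eval x * G x := by
        rw [h2]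
        rw [show ∫ x : ℝ, (derivative p * Hr n + p * derivative (Hr n)).eval x * G x
            = (∫ x : ℝ, (derivative p * Hr n).eval x * G x)
              + ∫ x : ℝ, (p * derivative (Hr n)).eval x * G x by
          rw [← integral_add (integrable_poly_G _) (integrable_poly_G _)]
          congr 1; ext x; simp [add_mul]]
        ring

lemma base : ∫ x : ℝ, G x = Real.sqrt (2 * π) := by
  have h := integral_gaussian (1/2)
  have he : (fun x : ℝ => Real.exp (-(1/2) * x ^ 2)) = G := by
    funext x; rw [G]; congr 1; ring
  rw [he, show π / (1/2:ℝ) = 2 * π by ring] at h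
  rw [h]

lemma main : ∀ n m : ℕ, ∫ x : ℝ, (Hr m * Hr n).eval x * G x
    = (if m = n then (n.factorial : ℝ) else 0) * Real.sqrt (2 * π) := by
  intro n
  induction n with
  | zero =>
      intro m
      match m with
      | 0 => simpa [Hr_zero] using base
      | k + 1 =>
          rw [show Hr (k+1) * Hr 0 = 1 * Hr (k+1) by rw [Hr_zero]; ring, step 1 k]
          simp
  | succ n ih =>
      intro m
      have hstep := step (Hr m) n
      rw [hstep]
      match m with
      | 0 =>
          simp only [Hr_zero, derivative_one, zero_mul]
          simp
      | k + 1 =>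
          rw [derivative_Hr_succ k]
          have : (((k:ℕ) + 1) • Hr k) * Hr n = ((k:ℕ)+1) • (Hr k * Hr n) := smul_mul_assoc _ _ _
          rw [this]
          have heval : ∀ x : ℝ, ((((k:ℕ)+1) • (Hr k * Hr n)).eval x) * G x
              = ((k:ℝ)+1) * ((Hr k * Hr n).eval x * G x) := by
            intro x
            rw [nsmul_eq_mul]
            push_cast
            simp [eval_mul]
            ring
          simp only [heval]
          rw [MeasureTheory.integral_const_mul, ih k]
          by_cases hk : k = n
          · subst hk
            have : k + 1 = k + 1 := rfl
            simp [Nat.factorial_succ]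
            push_cast
            ring
          · have hk2 : ¬ (k + 1 = n + 1) := by omega
            simp [hk, hk2]

/-- Orthogonality of the probabilists' Hermite polynomials with respect to the standard
Gaussian measure `γ` on `ℝ`: `∫ Heₘ(x) Heₙ(x) dγ(x)` is `n!` when `m = n` and `0` otherwise. -/
theorem stmt10 (m n : ℕ) :
    ∫ x, Polynomial.aeval x (Polynomial.hermite m) * Polynomial.aeval x (Polynomial.hermite n)
        ∂(gaussianReal 0 1) = if m = n then (n.factorial : ℝ) else 0 := by
  have hπ : Real.sqrt (2 * π) ≠ 0 := by positivity
  have hpdf : ∀ x : ℝ, gaussianPDFReal 0 1 x = (Real.sqrt (2 * π))⁻¹ * G x := by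
    intro x
    rw [gaussianPDFReal, G]
    norm_num
  have hconv : ∫ x, Polynomial.aeval x (Polynomial.hermite m)
        * Polynomial.aeval x (Polynomial.hermite n) ∂(gaussianReal 0 1)
      = ∫ x : ℝ, gaussianPDFReal 0 1 x * ((Hr m * Hr n).eval x) := by
    rw [gaussianReal_of_var_ne_zero 0 one_ne_zero]
    have hd : (gaussianPDF 0 1) = fun x => ((gaussianPDFReal 0 1 x).toNNReal : ℝ≥0∞) := rfl
    rw [hd, integral_withDensity_eq_integral_smul
      ((measurable_gaussianPDFReal 0 1).real_toNNReal) _]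
    congr 1
    ext x
    rw [NNReal.smul_def, Real.coe_toNNReal _ (gaussianPDFReal_nonneg 0 1 x)]
    simp [aeval_eq_Hr, eval_mul]
  rw [hconv]
  have : ∀ x : ℝ, gaussianPDFReal 0 1 x * ((Hr m * Hr n).eval x)
      = (Real.sqrt (2 * π))⁻¹ * ((Hr m * Hr n).eval x * G x) := by
    intro x; rw [hpdf]; ring
  simp only [this]
  rw [MeasureTheory.integral_const_mul, main n m]
  field_simp
end

section
/- Fix an integer K ≥ 2, nonnegative integers η_1, …, η_{K−1}, and set λ̄_i = Σ_{h=i}^{K−1} (2η_h + 1) for 1 ≤ i ≤ K (so λ̄_K = 0). Then for every integer r ≥ 0, r! · Σ_δ [ det( 1 / (δ_j + (λ̄_i − λ̄_j + j − i)/2)! )_{1≤i,j≤K} · ∏_{1≤i<j≤K} (λ̄_i − λ̄_j − 2δ_i + 2δ_j + j − i) / (λ̄_i − λ̄_j + j − i) ] = K^r, where the sum is over all K-tuples δ = (δ_1, …, δ_K) of nonnegative integers with δ_1 + … + δ_K = r and δ_i ≤ δ_{i+1} + η_i for 1 ≤ i ≤ K − 1, and with the convention that 1/m! = 0 whenever m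 is a negative integer. -/
open Finset

attribute [local instance] Classical.propDecidable

/-- `invFact m = 1/m!`, with the convention that `1/m! = 0` for negative integers `m`. -/
noncomputable def invFact (m : ℤ) : ℚ :=
  if 0 ≤ m then ((m.toNat).factorial : ℚ)⁻¹ else 0

/-- `lambar K η i = λ̄_i = Σ_{h=i}^{K−2} (2 η_h + 1)` (`0`-indexed), so `λ̄_{K−1} = 0`. -/
def lambar (K : ℕ) (η : ℕ → ℕ) (i : ℕ) : ℕ :=
  ∑ h ∈ Finset.Ico i (K - 1), (2 * η h + 1)

section Stmt11Aux

open Matrix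

lemma invFact_of_neg {m : ℤ} (h : m < 0) : invFact m = 0 := by
  simp [invFact, not_le.2 h]

lemma invFact_zero : invFact 0 = 1 := by simp [invFact]

lemma mul_invFact (m : ℤ) : (m : ℚ) * invFact m = invFact (m - 1) := by
  rcases lt_trichotomy m 0 with h | h | h
  · rw [invFact_of_neg h, invFact_of_neg (by omega), mul_zero]
  · subst h
    norm_num [invFact]
  · obtain ⟨n, rfl⟩ : ∃ n : ℕ, m = (n : ℤ) + 1 := ⟨(m - 1).toNat, by omega⟩
    have h1 : ((n : ℤ) + 1).toNat = n + 1 := by omega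
    have h2 : ((n : ℤ) + 1 - 1).toNat = n := by omega
    rw [invFact, invFact, if_pos (by omega), if_pos (by omega), h1, h2]
    have hne : ((n.factorial : ℚ)) ≠ 0 := by positivity
    rw [Nat.factorial_succ]
    push_cast
    field_simp

/-- Key trace identity: summing determinants where column `k` is replaced by
column `k` of `D * M` gives `trace D * det M`. -/
lemma sumdet {n : Type*} [DecidableEq n] [Fintype n] (M D : Matrix n n ℚ) :
    ∑ k, (M.updateCol k (fun i => (D * M) i k)).det = D.trace * M.det := by
  have h1 : ∀ k, (M.updateCol k (fun i => (D * M) i k)).det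
      = (M.adjugate *ᵥ (fun i => (D * M) i k)) k := by
    intro k
    rw [← Matrix.cramer_eq_adjugate_mulVec, Matrix.cramer_apply]
  simp only [h1]
  have h2 : ∑ k, (M.adjugate *ᵥ fun i => (D * M) i k) k
      = (M.adjugate * (D * M)).trace := by
    simp [Matrix.trace, Matrix.mulVec, Matrix.mul_apply, Matrix.diag, dotProduct]
  rw [h2, ← Matrix.mul_assoc, Matrix.trace_mul_comm, ← Matrix.mul_assoc,
    Matrix.mul_adjugate, Matrix.smul_mul, Matrix.one_mul, Matrix.trace_smul]
  simp [mul_comm]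

/-- Discrete harmonicity of the Vandermonde determinant. -/
lemma harm {K : ℕ} (y : Fin K → ℚ) (c : ℚ) :
    ∑ k, (Matrix.vandermonde (Function.update y k (y k + c))).det
      = K * (Matrix.vandermonde y).det := by
  set P : Matrix (Fin K) (Fin K) ℚ :=
    Matrix.of fun m j : Fin K => ((j : ℕ).choose (m : ℕ) : ℚ) * c ^ ((j : ℕ) - (m : ℕ)) with hP
  have hrow : ∀ (t : ℚ) (j : Fin K), (∑ m : Fin K, t ^ (m : ℕ) * P m j) = (t + c) ^ (j : ℕ) := by
    intro t j
    have e1 : (∑ m : Fin K, t ^ (m : ℕ) * P m j)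
        = ∑ m ∈ Finset.range K, t ^ m * c ^ ((j:ℕ) - m) * (((j:ℕ)).choose m : ℚ) := by
      rw [← Fin.sum_univ_eq_sum_range (fun m => t ^ m * c ^ ((j:ℕ) - m) * (((j:ℕ)).choose m : ℚ))]
      apply Finset.sum_congr rfl
      intro m _
      simp only [hP, Matrix.of_apply]
      ring
    have e2 : ∑ m ∈ Finset.range ((j:ℕ) + 1), t ^ m * c ^ ((j:ℕ) - m) * (((j:ℕ)).choose m : ℚ)
        = ∑ m ∈ Finset.range K, t ^ m * c ^ ((j:ℕ) - m) * (((j:ℕ)).choose m : ℚ) := by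
      apply Finset.sum_subset
      · intro m hm
        simp only [Finset.mem_range] at hm ⊢
        omega
      · intro m _ hm
        simp only [Finset.mem_range, not_lt] at hm
        rw [Nat.choose_eq_zero_of_lt (by omega)]
        simp
    rw [e1, ← e2, add_pow]
  have hupd : ∀ k : Fin K, Matrix.vandermonde (Function.update y k (y k + c))
      = ((Matrix.vandermonde y)ᵀ.updateCol k (fun j => (Pᵀ * (Matrix.vandermonde y)ᵀ) j k))ᵀ := by
    intro k
    ext i j
    rw [Matrix.transpose_apply, Matrix.updateCol_apply]
    by_cases h : i = k
    · subst h
      simp only [if_pos rfl, Matrix.vandermonde_apply, Function.update_self]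
      rw [Matrix.mul_apply]
      rw [← hrow (y i) j]
      apply Finset.sum_congr rfl
      intro m _
      simp [Matrix.vandermonde_apply, mul_comm]
    · simp [Matrix.vandermonde_apply, h, Function.update_of_ne h]
  calc ∑ k, (Matrix.vandermonde (Function.update y k (y k + c))).det
      = ∑ k, ((Matrix.vandermonde y)ᵀ.updateCol k
          (fun j => (Pᵀ * (Matrix.vandermonde y)ᵀ) j k)).det := by
        refine Finset.sum_congr rfl fun k _ => ?_
        rw [hupd k, Matrix.det_transpose]
    _ = Pᵀ.trace * (Matrix.vandermonde y)ᵀ.det := sumdet _ _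
    _ = K * (Matrix.vandermonde y).det := by
        rw [Matrix.det_transpose, Matrix.trace_transpose]
        congr 1
        simp only [Matrix.trace, Matrix.diag, hP, Matrix.of_apply, Nat.choose_self,
          Nat.sub_self, pow_zero, Nat.cast_one, one_mul, mul_one]
        simp

/-- half of `λ̄_i − λ̄_j + j − i` (an exact integer division). -/
def gv (K : ℕ) (η : ℕ → ℕ) (i j : Fin K) : ℤ :=
  ((lambar K η i : ℤ) - (lambar K η j : ℤ) + (j : ℤ) - (i : ℤ)) / 2

def av (K : ℕ) (η : ℕ → ℕ) (i : Fin K) : ℤ := (lambar K η i : ℤ) - (i : ℤ)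

def yv (K : ℕ) (η : ℕ → ℕ) (d : Fin K → ℤ) (j : Fin K) : ℤ :=
  (lambar K η j : ℤ) - 2 * d j - (j : ℤ)

lemma lam_split (K : ℕ) (η : ℕ → ℕ) {i j : ℕ} (hij : i ≤ j) (hj : j ≤ K - 1) :
    lambar K η i = (∑ h ∈ Finset.Ico i j, (2 * η h + 1)) + lambar K η j :=
  (Finset.sum_Ico_consecutive _ hij hj).symm

lemma lam_sub (K : ℕ) (η : ℕ → ℕ) (i j : Fin K) (hij : (i : ℕ) ≤ (j : ℕ)) :
    (lambar K η i : ℤ) - (lambar K η j : ℤ)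
      = 2 * (∑ h ∈ Finset.Ico (i : ℕ) (j : ℕ), (η h : ℤ)) + (j : ℤ) - (i : ℤ) := by
  have hj : (j : ℕ) ≤ K - 1 := by have := j.isLt; omega
  have hcard : ((Finset.Ico (i : ℕ) (j : ℕ)).card : ℤ) = (j : ℤ) - (i : ℤ) := by
    rw [Nat.card_Ico]; push_cast [hij]; ring
  rw [lam_split K η hij hj]
  push_cast
  rw [Finset.sum_add_distrib, Finset.sum_const, nsmul_eq_mul, mul_one, Finset.mul_sum]
  push_cast at hcard
  rw [hcard]
  ring

lemma gv_spec (K : ℕ) (η : ℕ → ℕ) (i j : Fin K) :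
    (lambar K η i : ℤ) - (lambar K η j : ℤ) + (j : ℤ) - (i : ℤ) = 2 * gv K η i j := by
  rcases le_or_gt (i : ℕ) (j : ℕ) with h | h
  · have e := lam_sub K η i j h
    unfold gv
    rw [show (lambar K η i : ℤ) - (lambar K η j : ℤ) + (j : ℤ) - (i : ℤ)
        = 2 * ((∑ h ∈ Finset.Ico (i : ℕ) (j : ℕ), (η h : ℤ)) + (j : ℤ) - (i : ℤ)) by omega]
    rw [Int.mul_ediv_cancel_left _ (by norm_num)]
  · have e := lam_sub K η j i h.le
    unfold gv
    rw [show (lambar K η i : ℤ) - (lambar K η j : ℤ) + (j : ℤ) - (i : ℤ)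
        = 2 * (-(∑ h ∈ Finset.Ico (j : ℕ) (i : ℕ), (η h : ℤ)) + (j : ℤ) - (i : ℤ)) by omega]
    rw [Int.mul_ediv_cancel_left _ (by norm_num)]

lemma gv_ge (K : ℕ) (η : ℕ → ℕ) (i j : Fin K) (hij : (i : ℕ) ≤ (j : ℕ)) :
    (j : ℤ) - (i : ℤ) ≤ gv K η i j := by
  have e := lam_sub K η i j hij
  have e2 := gv_spec K η i j
  have hs : 0 ≤ ∑ h ∈ Finset.Ico (i : ℕ) (j : ℕ), (η h : ℤ) :=
    Finset.sum_nonneg fun h _ => by positivity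
  omega

lemma gv_lt (K : ℕ) (η : ℕ → ℕ) (i j : Fin K) (hij : (j : ℕ) < (i : ℕ)) :
    gv K η i j < 0 := by
  have e := lam_sub K η j i hij.le
  have e2 := gv_spec K η i j
  have hs : 0 ≤ ∑ h ∈ Finset.Ico (j : ℕ) (i : ℕ), (η h : ℤ) :=
    Finset.sum_nonneg fun h _ => by positivity
  have : (j : ℤ) < (i : ℤ) := by exact_mod_cast hij
  omega

lemma gv_self (K : ℕ) (η : ℕ → ℕ) (i : Fin K) : gv K η i i = 0 := by
  have := gv_spec K η i i; omega

lemma av_antitone (K : ℕ) (η : ℕ → ℕ) (i j : Fin K) (hij : (i : ℕ) ≤ (j : ℕ)) :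
    av K η j ≤ av K η i := by
  have e2 := gv_spec K η i j
  have := gv_ge K η i j hij
  have : (i : ℤ) ≤ (j : ℤ) := by exact_mod_cast hij
  unfold av; omega

/-- The determinant matrix. -/
noncomputable def Mm (K : ℕ) (η : ℕ → ℕ) (d : Fin K → ℤ) : Matrix (Fin K) (Fin K) ℚ :=
  Matrix.of fun i j : Fin K =>
    invFact (d j + ((lambar K η i : ℤ) - (lambar K η j : ℤ) + (j : ℤ) - (i : ℤ)) / 2)

lemma Mm_apply (K : ℕ) (η : ℕ → ℕ) (d : Fin K → ℤ) (i j : Fin K) :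
    Mm K η d i j = invFact (d j + gv K η i j) := rfl

lemma two_mul_arg (K : ℕ) (η : ℕ → ℕ) (d : Fin K → ℤ) (i j : Fin K) :
    2 * (d j + gv K η i j) = av K η i - yv K η d j := by
  have := gv_spec K η i j
  unfold av yv; omega

lemma det_zero_of_yv_eq (K : ℕ) (η : ℕ → ℕ) (d : Fin K → ℤ) {k1 k2 : Fin K}
    (hne : k1 ≠ k2) (h : yv K η d k1 = yv K η d k2) : (Mm K η d).det = 0 := by
  apply Matrix.det_zero_of_column_eq hne
  intro i
  rw [Mm_apply, Mm_apply]
  congr 1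
  have e1 := two_mul_arg K η d i k1
  have e2 := two_mul_arg K η d i k2
  omega

lemma det_zero_block (K : ℕ) (η : ℕ → ℕ) (d : Fin K → ℤ) (k : Fin K)
    (h : ∀ j : Fin K, j ≤ k → ∀ i : Fin K, k ≤ i → av K η i < yv K η d j) :
    (Mm K η d).det = 0 := by
  rw [Matrix.det_apply]
  apply Finset.sum_eq_zero
  intro σ _
  have hex : ∃ j : Fin K, j ≤ k ∧ k ≤ σ j := by
    by_contra hcon
    push_neg at hcon
    have hmaps : ∀ j ∈ Finset.Iic k, σ j ∈ Finset.Iio k := fun j hj =>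
      Finset.mem_Iio.2 (hcon j (Finset.mem_Iic.1 hj))
    have hinj : Set.InjOn σ (Finset.Iic k) := fun a _ b _ hab => σ.injective hab
    have hcard := Finset.card_le_card_of_injOn σ hmaps hinj
    rw [Fin.card_Iic, Fin.card_Iio] at hcard
    omega
  obtain ⟨j, hj, hk⟩ := hex
  have hz : Mm K η d (σ j) j = 0 := by
    rw [Mm_apply]
    apply invFact_of_neg
    have e1 := two_mul_arg K η d (σ j) j
    have := h j hj (σ j) hk
    omega
  have hp : (∏ i, Mm K η d (σ i) i) = 0 := Finset.prod_eq_zero (Finset.mem_univ j) hz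
  rw [hp, smul_zero]

/-- The Vandermonde-type product. -/
def Np (K : ℕ) (η : ℕ → ℕ) (d : Fin K → ℤ) : ℚ :=
  ∏ i : Fin K, ∏ j ∈ Finset.Ioi i, ((yv K η d i - yv K η d j : ℤ) : ℚ)

lemma Np_eq_vand (K : ℕ) (η : ℕ → ℕ) (d : Fin K → ℤ) :
    Np K η d = (∏ i : Fin K, ∏ _j ∈ Finset.Ioi i, (-1 : ℚ)) *
      (Matrix.vandermonde fun i => ((yv K η d i : ℤ) : ℚ)).det := by
  rw [Matrix.det_vandermonde, ← Finset.prod_mul_distrib]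
  apply Finset.prod_congr rfl
  intro i _
  rw [← Finset.prod_mul_distrib]
  apply Finset.prod_congr rfl
  intro j _
  push_cast
  ring

lemma Np_harm (K : ℕ) (η : ℕ → ℕ) (d : Fin K → ℤ) :
    ∑ k, Np K η (fun j => d j + if j = k then 1 else 0) = K * Np K η d := by
  have key : ∀ k : Fin K, (fun i => ((yv K η (fun j => d j + if j = k then 1 else 0) i : ℤ) : ℚ))
      = Function.update (fun i => ((yv K η d i : ℤ) : ℚ)) k
          (((yv K η d k : ℤ) : ℚ) + (-2)) := by
    intro k
    funext i
    by_cases h : i = k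
    · subst h
      rw [Function.update_self]
      unfold yv
      have h1 : (if i = i then (1:ℤ) else 0) = 1 := if_pos rfl
      simp only [h1]
      push_cast
      ring
    · rw [Function.update_of_ne h]
      unfold yv
      simp [h]
  calc ∑ k, Np K η (fun j => d j + if j = k then 1 else 0)
      = ∑ k, (∏ i : Fin K, ∏ _j ∈ Finset.Ioi i, (-1 : ℚ)) *
          (Matrix.vandermonde (Function.update (fun i => ((yv K η d i : ℤ) : ℚ)) k
            (((yv K η d k : ℤ) : ℚ) + (-2)))).det := by
        refine Finset.sum_congr rfl fun k _ => ?_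
        rw [Np_eq_vand, key k]
    _ = (∏ i : Fin K, ∏ _j ∈ Finset.Ioi i, (-1 : ℚ)) *
          ∑ k, (Matrix.vandermonde (Function.update (fun i => ((yv K η d i : ℤ) : ℚ)) k
            ((fun i => ((yv K η d i : ℤ) : ℚ)) k + (-2)))).det := by
        rw [Finset.mul_sum]
    _ = K * Np K η d := by
        rw [harm (fun i => ((yv K η d i : ℤ) : ℚ)) (-2), Np_eq_vand]
        ring

lemma av_sub (K : ℕ) (η : ℕ → ℕ) (i j : Fin K) :
    av K η i - av K η j = 2 * gv K η i j := by
  have := gv_spec K η i j; unfold av; omega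

lemma recur (K : ℕ) (η : ℕ → ℕ) (d : Fin K → ℤ) :
    ∑ k, (Mm K η (fun j => d j - if j = k then 1 else 0)).det
      = (∑ j, ((d j : ℤ) : ℚ)) * (Mm K η d).det := by
  set M := Mm K η d with hM
  set q : Fin K → ℚ := fun i => ((av K η i : ℤ) : ℚ) / 2 with hq
  have hterm : ∀ k, (Mm K η (fun j => d j - if j = k then 1 else 0)).det
      = ((d k : ℚ) - q k) * M.det
        + (M.updateCol k (fun i => (Matrix.diagonal q * M) i k)).det := by
    intro k
    have h1 : Mm K η (fun j => d j - if j = k then 1 else 0)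
        = M.updateCol k ((((d k : ℚ) - q k) • fun i' => M i' k)
            + fun i' => (Matrix.diagonal q * M) i' k) := by
      ext i j
      rw [Matrix.updateCol_apply]
      by_cases h : j = k
      · rw [if_pos h]
        subst h
        simp only [Pi.add_apply, Pi.smul_apply, smul_eq_mul]
        have hgv : q i - q j = ((gv K η i j : ℤ) : ℚ) := by
          have h2 := av_sub K η i j
          have h3 : ((av K η i : ℤ) : ℚ) - ((av K η j : ℤ) : ℚ)
              = 2 * ((gv K η i j : ℤ) : ℚ) := by exact_mod_cast congrArg (Int.cast : ℤ → ℚ) h2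
          rw [hq]
          linarith
        have hdiag : (Matrix.diagonal q * M) i j = q i * M i j := by
          simp [Matrix.diagonal_mul]
        rw [hdiag]
        have hMij : M i j = invFact (d j + gv K η i j) := rfl
        rw [hMij]
        have step : ((d j : ℚ) - q j) * invFact (d j + gv K η i j)
              + q i * invFact (d j + gv K η i j)
            = ((d j + gv K η i j : ℤ) : ℚ) * invFact (d j + gv K η i j) := by
          push_cast
          push_cast at hgv
          linear_combination invFact (d j + gv K η i j) * hgv
        rw [step, mul_invFact, Mm_apply]
        congr 1
        rw [if_pos rfl]
        ring
      · rw [if_neg h]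
        show invFact _ = invFact (d j + gv K η i j)
        congr 1
        unfold gv
        simp [h]
    rw [h1, Matrix.det_updateCol_add, Matrix.det_updateCol_smul,
      Matrix.updateCol_eq_self]
  rw [Finset.sum_congr rfl (fun k _ => hterm k), Finset.sum_add_distrib,
    ← Finset.sum_mul, sumdet M (Matrix.diagonal q), Matrix.trace_diagonal,
    Finset.sum_sub_distrib]
  ring

/-- The admissibility condition on `δ`. -/
def Tcond (K : ℕ) (η : ℕ → ℕ) (δ : Fin K → ℕ) : Prop :=
  ∀ i j : Fin K, (j : ℕ) = (i : ℕ) + 1 → δ i ≤ δ j + η i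

lemma lam_succ (K : ℕ) (η : ℕ → ℕ) (i j : Fin K) (h : (j : ℕ) = (i : ℕ) + 1) :
    (lambar K η i : ℤ) = (lambar K η j : ℤ) + 2 * η (i : ℕ) + 1 := by
  have hij : (i : ℕ) ≤ (j : ℕ) := by omega
  have hs := lam_sub K η i j hij
  have hico : Finset.Ico (i : ℕ) (j : ℕ) = {(i : ℕ)} := by
    rw [h]; exact Nat.Ico_succ_singleton _
  rw [hico, Finset.sum_singleton] at hs
  have hj : (j : ℤ) = (i : ℤ) + 1 := by exact_mod_cast congrArg (Nat.cast : ℕ → ℤ) h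
  omega

lemma y_step (K : ℕ) (η : ℕ → ℕ) {δ : Fin K → ℕ} (hc : Tcond K η δ) (i j : Fin K)
    (h : (j : ℕ) = (i : ℕ) + 1) :
    yv K η (fun t => (δ t : ℤ)) j + 2 ≤ yv K η (fun t => (δ t : ℤ)) i := by
  have h1 := lam_succ K η i j h
  have h2 : (δ i : ℤ) ≤ (δ j : ℤ) + (η (i : ℕ) : ℤ) := by exact_mod_cast hc i j h
  have hj : (j : ℤ) = (i : ℤ) + 1 := by exact_mod_cast congrArg (Nat.cast : ℕ → ℤ) h
  unfold yv
  beta_reduce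
  omega

lemma y_chain (K : ℕ) (η : ℕ → ℕ) {δ : Fin K → ℕ} (hc : Tcond K η δ) :
    ∀ n : ℕ, ∀ i j : Fin K, (j : ℕ) = (i : ℕ) + n →
      yv K η (fun t => (δ t : ℤ)) j + 2 * (n : ℤ) ≤ yv K η (fun t => (δ t : ℤ)) i := by
  intro n
  induction n with
  | zero =>
    intro i j h
    have : i = j := Fin.ext (by omega)
    subst this
    simp
  | succ n ih =>
    intro i j h
    have hlt : (i : ℕ) + n < K := by have := j.isLt; omega
    have e1 := ih i ⟨(i : ℕ) + n, hlt⟩ rfl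
    have e2 := y_step K η hc ⟨(i : ℕ) + n, hlt⟩ j (by simp; omega)
    push_cast
    push_cast at e1
    omega

lemma det_Mm_zero (K : ℕ) (η : ℕ → ℕ) : (Mm K η fun _ => 0).det = 1 := by
  have htri : (Mm K η fun _ => 0).BlockTriangular id := by
    intro i j hij
    rw [Mm_apply]
    apply invFact_of_neg
    have := gv_lt K η i j (by exact_mod_cast hij)
    omega
  rw [Matrix.det_of_upperTriangular htri]
  apply Finset.prod_eq_one
  intro i _
  rw [Mm_apply]
  have := gv_self K η i
  rw [show (0 : ℤ) + gv K η i i = 0 by omega]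
  exact invFact_zero

lemma Np_zero_ne (K : ℕ) (η : ℕ → ℕ) : Np K η (fun _ => 0) ≠ 0 := by
  unfold Np
  rw [Finset.prod_ne_zero_iff]
  intro i _
  rw [Finset.prod_ne_zero_iff]
  intro j hj
  have hij : (i : ℕ) < (j : ℕ) := by exact_mod_cast Finset.mem_Ioi.1 hj
  have hg := gv_ge K η i j hij.le
  have hgs := gv_spec K η i j
  have hlt : (i : ℤ) < (j : ℤ) := by exact_mod_cast hij
  have : yv K η (fun _ => 0) i - yv K η (fun _ => 0) j ≠ 0 := by
    unfold yv; beta_reduce; omega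
  exact_mod_cast this

lemma CL (K : ℕ) (η : ℕ → ℕ) (r : ℕ) :
    ((r : ℚ) + 1) * ∑ δ ∈ (Finset.Nat.antidiagonalTuple K (r + 1)).filter (Tcond K η),
        (Mm K η fun t => (δ t : ℤ)).det * Np K η (fun t => (δ t : ℤ))
      = (K : ℚ) * ∑ δ ∈ (Finset.Nat.antidiagonalTuple K r).filter (Tcond K η),
        (Mm K η fun t => (δ t : ℤ)).det * Np K η (fun t => (δ t : ℤ)) := by
  classical
  set T1 := (Finset.Nat.antidiagonalTuple K (r + 1)).filter (Tcond K η) with hT1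
  set T0 := (Finset.Nat.antidiagonalTuple K r).filter (Tcond K η) with hT0
  set F : (Fin K → ℕ) × Fin K → ℚ := fun p =>
    (Mm K η fun t => (p.1 t : ℤ) - if t = p.2 then 1 else 0).det
      * Np K η (fun t => (p.1 t : ℤ)) with hF
  set G : (Fin K → ℕ) × Fin K → ℚ := fun p =>
    (Mm K η fun t => (p.1 t : ℤ)).det
      * Np K η (fun t => (p.1 t : ℤ) + if t = p.2 then 1 else 0) with hG
  have hmem1 : ∀ δ ∈ T1, (∑ t, δ t) = r + 1 ∧ Tcond K η δ := by
    intro δ hδ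
    obtain ⟨h1, h2⟩ := Finset.mem_filter.1 hδ
    exact ⟨Finset.Nat.mem_antidiagonalTuple.1 h1, h2⟩
  have hmem0 : ∀ δ ∈ T0, (∑ t, δ t) = r ∧ Tcond K η δ := by
    intro δ hδ
    obtain ⟨h1, h2⟩ := Finset.mem_filter.1 hδ
    exact ⟨Finset.Nat.mem_antidiagonalTuple.1 h1, h2⟩
  have hL : ((r : ℚ) + 1) * ∑ δ ∈ T1,
        (Mm K η fun t => (δ t : ℤ)).det * Np K η (fun t => (δ t : ℤ))
      = ∑ p ∈ T1 ×ˢ Finset.univ, F p := by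
    rw [Finset.sum_product, Finset.mul_sum]
    refine Finset.sum_congr rfl fun δ hδ => ?_
    obtain ⟨hsum, _⟩ := hmem1 δ hδ
    have hcast : ((r : ℚ) + 1) = ∑ t, ((δ t : ℤ) : ℚ) := by
      have h2 : (((∑ t, δ t : ℕ)) : ℚ) = (r : ℚ) + 1 := by rw [hsum]; push_cast; ring
      rw [← h2]
      push_cast
      rfl
    calc ((r : ℚ) + 1) * ((Mm K η fun t => (δ t : ℤ)).det * Np K η (fun t => (δ t : ℤ)))
        = ((∑ t, ((δ t : ℤ) : ℚ)) * (Mm K η fun t => (δ t : ℤ)).det)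
            * Np K η (fun t => (δ t : ℤ)) := by rw [← hcast]; ring
      _ = (∑ k, (Mm K η fun t => (δ t : ℤ) - if t = k then 1 else 0).det)
            * Np K η (fun t => (δ t : ℤ)) := by rw [recur]
      _ = ∑ k, F (δ, k) := by rw [Finset.sum_mul]
  have hR : (K : ℚ) * ∑ δ ∈ T0,
        (Mm K η fun t => (δ t : ℤ)).det * Np K η (fun t => (δ t : ℤ))
      = ∑ p ∈ T0 ×ˢ Finset.univ, G p := by
    rw [Finset.sum_product, Finset.mul_sum]
    refine Finset.sum_congr rfl fun δ _ => ?_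
    calc (K : ℚ) * ((Mm K η fun t => (δ t : ℤ)).det * Np K η (fun t => (δ t : ℤ)))
        = (Mm K η fun t => (δ t : ℤ)).det * ((K : ℚ) * Np K η (fun t => (δ t : ℤ))) := by
          ring
      _ = (Mm K η fun t => (δ t : ℤ)).det
            * ∑ k, Np K η (fun t => (δ t : ℤ) + if t = k then 1 else 0) := by
          rw [Np_harm]
      _ = ∑ k, G (δ, k) := by rw [Finset.mul_sum]
  rw [hL, hR]
  -- boundary vanishing for F
  have hzero1 : ∀ p ∈ T1 ×ˢ (Finset.univ : Finset (Fin K)), F p ≠ 0 →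
      (1 ≤ p.1 p.2 ∧ (fun t => p.1 t - if t = p.2 then 1 else 0) ∈ T0) := by
    rintro ⟨δ, k⟩ hp hne
    by_contra hcon
    apply hne
    obtain ⟨hδT1, -⟩ := Finset.mem_product.1 hp
    obtain ⟨hsum, hcond⟩ := hmem1 δ hδT1
    have hdet : (Mm K η fun t => (δ t : ℤ) - if t = k then 1 else 0).det = 0 := by
      by_cases h0 : 1 ≤ δ k
      · -- the constraint for `sub δ k` must fail
        have hsub_sum : (fun t => δ t - if t = k then 1 else 0) ∈
            Finset.Nat.antidiagonalTuple K r := by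
          rw [Finset.Nat.mem_antidiagonalTuple]
          have he : ∀ t, δ t = (δ t - if t = k then 1 else 0) + (if t = k then 1 else 0) := by
            intro t; by_cases h : t = k <;> simp [h] <;> omega
          have h2 : (∑ t, (δ t - if t = k then 1 else 0)) + ∑ t, (if t = k then (1:ℕ) else 0)
              = ∑ t, δ t := by
            rw [← Finset.sum_add_distrib]
            exact Finset.sum_congr rfl fun t _ => (he t).symm
          have hone : ∑ t : Fin K, (if t = k then (1:ℕ) else 0) = 1 := by
            rw [Finset.sum_ite_eq' Finset.univ k (fun _ => 1)]
            simp
          omega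
        have hnc : ¬ Tcond K η (fun t => δ t - if t = k then 1 else 0) := by
          intro hc
          exact hcon ⟨h0, Finset.mem_filter.2 ⟨hsub_sum, hc⟩⟩
        unfold Tcond at hnc
        push_neg at hnc
        obtain ⟨i, j, hij, hlt⟩ := hnc
        have hinej : i ≠ j := by intro h; rw [h] at hij; omega
        by_cases hik : i = k
        · -- impossible: constraint only loosens
          exfalso
          subst hik
          have hjk : j ≠ i := fun h => hinej h.symm
          have := hcond i j hij
          beta_reduce at hlt
          rw [if_pos rfl, if_neg hjk] at hlt
          omega
        · by_cases hjk : j = k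
          · -- equal columns
            subst hjk
            have := hcond i j hij
            beta_reduce at hlt
            rw [if_neg hik, if_pos rfl] at hlt
            have heq : δ i = δ j + η (i : ℕ) := by omega
            apply det_zero_of_yv_eq K η _ hik
            have h1 := lam_succ K η i j hij
            have hj : (j : ℤ) = (i : ℤ) + 1 := by
              exact_mod_cast congrArg (Nat.cast : ℕ → ℤ) hij
            have heqz : (δ i : ℤ) = (δ j : ℤ) + (η (i : ℕ) : ℤ) := by exact_mod_cast heq
            unfold yv
            beta_reduce
            rw [if_neg hik, if_pos rfl]
            omega
          · exfalso
            have := hcond i j hij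
            beta_reduce at hlt
            rw [if_neg hik, if_neg hjk] at hlt
            omega
      · -- δ k = 0 : block of zeros
        have h0' : δ k = 0 := by omega
        apply det_zero_block K η _ k
        intro j hj i hi
        have hival : (k : ℕ) ≤ (i : ℕ) := hi
        have hjval : (j : ℕ) ≤ (k : ℕ) := hj
        have hav : av K η i ≤ av K η k := av_antitone K η k i hival
        have hchain := y_chain K η hcond ((k : ℕ) - (j : ℕ)) j k (by omega)
        have hcast2 : (((k : ℕ) - (j : ℕ) : ℕ) : ℤ) = (k : ℤ) - (j : ℤ) := by
          push_cast [hjval]; ring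
        rw [hcast2] at hchain
        have hyk : yv K η (fun t => (δ t : ℤ)) k = av K η k := by
          unfold yv av
          beta_reduce
          have : (δ k : ℤ) = 0 := by exact_mod_cast h0'
          omega
        have hyy : yv K η (fun t => (δ t : ℤ) - if t = k then 1 else 0) j
            = yv K η (fun t => (δ t : ℤ)) j + (if j = k then 2 else 0) := by
          unfold yv
          beta_reduce
          by_cases h : j = k <;> simp [h] <;> ring
        rw [hyy]
        by_cases hjk2 : j = k
        · rw [if_pos hjk2, hjk2, hyk]
          omega
        · rw [if_neg hjk2]
          have hjlt : (j : ℕ) < (k : ℕ) := by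
            rcases lt_or_eq_of_le hjval with h | h
            · exact h
            · exact absurd (Fin.ext h) hjk2
          have : (j : ℤ) < (k : ℤ) := by exact_mod_cast hjlt
          omega
    rw [hF]
    simp only
    rw [hdet, zero_mul]
  -- boundary vanishing for G
  have hzero2 : ∀ p ∈ T0 ×ˢ (Finset.univ : Finset (Fin K)), G p ≠ 0 →
      (fun t => p.1 t + if t = p.2 then 1 else 0) ∈ T1 := by
    rintro ⟨δ, k⟩ hp hne
    by_contra hcon
    apply hne
    obtain ⟨hδT0, -⟩ := Finset.mem_product.1 hp
    obtain ⟨hsum, hcond⟩ := hmem0 δ hδT0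
    have hadd_sum : (fun t => δ t + if t = k then 1 else 0) ∈
        Finset.Nat.antidiagonalTuple K (r + 1) := by
      rw [Finset.Nat.mem_antidiagonalTuple]
      rw [Finset.sum_add_distrib, Finset.sum_ite_eq' Finset.univ k (fun _ => 1)]
      simp [hsum]
    have hnc : ¬ Tcond K η (fun t => δ t + if t = k then 1 else 0) := by
      intro hc
      exact hcon (Finset.mem_filter.2 ⟨hadd_sum, hc⟩)
    unfold Tcond at hnc
    push_neg at hnc
    obtain ⟨i, j, hij, hlt⟩ := hnc
    have hinej : i ≠ j := by intro h; rw [h] at hij; omega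
    by_cases hik : i = k
    · -- Np factor vanishes
      subst hik
      have hjk : j ≠ i := fun h => hinej h.symm
      have := hcond i j hij
      beta_reduce at hlt
      rw [if_pos rfl, if_neg hjk] at hlt
      have heq : δ i = δ j + η (i : ℕ) := by omega
      have hNp : Np K η (fun t => (δ t : ℤ) + if t = i then 1 else 0) = 0 := by
        unfold Np
        apply Finset.prod_eq_zero (Finset.mem_univ i)
        have hilt : i < j := by rw [Fin.lt_def]; omega
        apply Finset.prod_eq_zero (Finset.mem_Ioi.2 hilt)
        rw [Int.cast_eq_zero]
        have h1 := lam_succ K η i j hij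
        have hjc : (j : ℤ) = (i : ℤ) + 1 := by
          exact_mod_cast congrArg (Nat.cast : ℕ → ℤ) hij
        have heqz : (δ i : ℤ) = (δ j : ℤ) + (η (i : ℕ) : ℤ) := by exact_mod_cast heq
        unfold yv
        beta_reduce
        rw [if_pos rfl, if_neg hjk]
        omega
      rw [hG]
      simp only
      rw [hNp, mul_zero]
    · exfalso
      by_cases hjk : j = k
      · subst hjk
        have := hcond i j hij
        beta_reduce at hlt
        rw [if_neg hik, if_pos rfl] at hlt
        omega
      · have := hcond i j hij
        beta_reduce at hlt
        rw [if_neg hik, if_neg hjk] at hlt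
        omega
  rw [← Finset.sum_filter_of_ne hzero1, ← Finset.sum_filter_of_ne hzero2]
  refine Finset.sum_nbij'
    (fun p => ((fun t => p.1 t - if t = p.2 then 1 else 0), p.2))
    (fun p => ((fun t => p.1 t + if t = p.2 then 1 else 0), p.2))
    ?_ ?_ ?_ ?_ ?_
  · rintro ⟨δ, k⟩ hp
    obtain ⟨hprod, h0, hsub⟩ := Finset.mem_filter.1 hp
    have h0' : 1 ≤ δ k := h0
    refine Finset.mem_filter.2 ⟨Finset.mem_product.2 ⟨hsub, Finset.mem_univ _⟩, ?_⟩
    have he : (fun t => (δ t - if t = k then 1 else 0) + if t = k then 1 else 0) = δ := by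
      funext t; by_cases h : t = k <;> simp [h] <;> omega
    simp only [he]
    exact (Finset.mem_product.1 hprod).1
  · rintro ⟨δ, k⟩ hp
    obtain ⟨hprod, hadd⟩ := Finset.mem_filter.1 hp
    refine Finset.mem_filter.2 ⟨Finset.mem_product.2 ⟨hadd, Finset.mem_univ _⟩, ?_, ?_⟩
    · simp
    · have he : (fun t => (δ t + if t = k then 1 else 0) - if t = k then 1 else 0) = δ := by
        funext t; by_cases h : t = k <;> simp [h]
      simp only [he]
      exact (Finset.mem_product.1 hprod).1
  · rintro ⟨δ, k⟩ hp
    obtain ⟨-, h0, -⟩ := Finset.mem_filter.1 hp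
    have h0' : 1 ≤ δ k := h0
    have he : (fun t => (δ t - if t = k then 1 else 0) + if t = k then 1 else 0) = δ := by
      funext t; by_cases h : t = k <;> simp [h] <;> omega
    simp only [he]
  · rintro ⟨δ, k⟩ _
    have he : (fun t => (δ t + if t = k then 1 else 0) - if t = k then 1 else 0) = δ := by
      funext t; by_cases h : t = k <;> simp [h]
    simp only [he]
  · rintro ⟨δ, k⟩ hp
    obtain ⟨-, h0, -⟩ := Finset.mem_filter.1 hp
    have h0' : 1 ≤ δ k := h0
    rw [hF, hG]
    simp only
    have e1 : (fun t => ((δ t - if t = k then 1 else 0 : ℕ) : ℤ))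
        = fun t => (δ t : ℤ) - if t = k then 1 else 0 := by
      funext t
      by_cases h : t = k
      · simp only [if_pos h]
        subst h
        push_cast [h0]
        ring
      · simp [h]
    have e2 : (fun t => ((δ t - if t = k then 1 else 0 : ℕ) : ℤ) + if t = k then 1 else 0)
        = fun t => (δ t : ℤ) := by
      funext t
      by_cases h : t = k
      · simp only [if_pos h]
        subst h
        push_cast [h0]
        ring
      · simp [h]
    rw [e1, e2]

lemma central (K : ℕ) (η : ℕ → ℕ) (r : ℕ) :
    (r.factorial : ℚ) * ∑ δ ∈ (Finset.Nat.antidiagonalTuple K r).filter (Tcond K η),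
        (Mm K η fun t => (δ t : ℤ)).det * Np K η (fun t => (δ t : ℤ))
      = (K : ℚ) ^ r * Np K η (fun _ => 0) := by
  induction r with
  | zero =>
    rw [Finset.Nat.antidiagonalTuple_zero_right]
    have hc : Tcond K η (fun _ => 0) := fun i j _ => by simp
    rw [Finset.filter_singleton, if_pos]
    · rw [Finset.sum_singleton]
      have h0 : (fun t => (((0 : Fin K → ℕ) t : ℤ))) = (fun _ => (0:ℤ)) := by
        funext t; simp
      rw [h0, det_Mm_zero]
      simp
    · exact fun i j h => by simp
  | succ r ih =>
    have hCL := CL K η r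
    have hfac : ((r + 1).factorial : ℚ) = ((r : ℚ) + 1) * (r.factorial : ℚ) := by
      rw [Nat.factorial_succ]; push_cast; ring
    rw [hfac]
    calc ((r : ℚ) + 1) * (r.factorial : ℚ) * ∑ δ ∈ (Finset.Nat.antidiagonalTuple K (r+1)).filter (Tcond K η),
          (Mm K η fun t => (δ t : ℤ)).det * Np K η (fun t => (δ t : ℤ))
        = (r.factorial : ℚ) * (((r : ℚ) + 1) * ∑ δ ∈ (Finset.Nat.antidiagonalTuple K (r+1)).filter (Tcond K η),
          (Mm K η fun t => (δ t : ℤ)).det * Np K η (fun t => (δ t : ℤ))) := by ring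
      _ = (r.factorial : ℚ) * ((K : ℚ) * ∑ δ ∈ (Finset.Nat.antidiagonalTuple K r).filter (Tcond K η),
          (Mm K η fun t => (δ t : ℤ)).det * Np K η (fun t => (δ t : ℤ))) := by rw [hCL]
      _ = (K : ℚ) * ((r.factorial : ℚ) * ∑ δ ∈ (Finset.Nat.antidiagonalTuple K r).filter (Tcond K η),
          (Mm K η fun t => (δ t : ℤ)).det * Np K η (fun t => (δ t : ℤ))) := by ring
      _ = (K : ℚ) * ((K : ℚ) ^ r * Np K η (fun _ => 0)) := by rw [ih]
      _ = (K : ℚ) ^ (r + 1) * Np K η (fun _ => 0) := by ring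

end Stmt11Aux

/-- Fix `K ≥ 2`, nonnegative integers `η_1, …, η_{K−1}` and set
`λ̄_i = Σ_{h=i}^{K−1} (2η_h + 1)` (all written `0`-indexed below).  Then for every `r ≥ 0`,
`r! Σ_δ det(1/(δ_j + (λ̄_i − λ̄_j + j − i)/2)!)_{i,j} ∏_{i<j} (λ̄_i − λ̄_j − 2δ_i + 2δ_j + j − i)/(λ̄_i − λ̄_j + j − i) = K^r`,
the sum over `K`-tuples `δ` of nonnegative integers with `Σ δ_i = r` and
`δ_i ≤ δ_{i+1} + η_i`, with the convention `1/m! = 0` for `m < 0`. -/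
theorem stmt11 (K : ℕ) (hK : 2 ≤ K) (η : ℕ → ℕ) (r : ℕ) :
    (r.factorial : ℚ) *
      ∑ δ ∈ (Finset.Nat.antidiagonalTuple K r).filter
          (fun δ : Fin K → ℕ => ∀ i j : Fin K, (j : ℕ) = (i : ℕ) + 1 → δ i ≤ δ j + η i),
        (Matrix.det (Matrix.of fun i j : Fin K =>
            invFact ((δ j : ℤ) +
              ((lambar K η i : ℤ) - (lambar K η j : ℤ) + (j : ℤ) - (i : ℤ)) / 2))) *
          ∏ i : Fin K, ∏ j : Fin K,
            (if i < j then
              ((lambar K η i : ℚ) - (lambar K η j : ℚ) - 2 * (δ i : ℚ) + 2 * (δ j : ℚ) +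
                  (j : ℚ) - (i : ℚ)) /
                ((lambar K η i : ℚ) - (lambar K η j : ℚ) + (j : ℚ) - (i : ℚ))
            else 1)
      = (K : ℚ) ^ r := by
  classical
  have hfilter : (Finset.Nat.antidiagonalTuple K r).filter
        (fun δ : Fin K → ℕ => ∀ i j : Fin K, (j : ℕ) = (i : ℕ) + 1 → δ i ≤ δ j + η i)
      = (Finset.Nat.antidiagonalTuple K r).filter (Tcond K η) := by
    apply Finset.filter_congr
    intro δ _
    rfl
  rw [hfilter]
  have hprod : ∀ δ : Fin K → ℕ,
      (∏ i : Fin K, ∏ j : Fin K,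
        (if i < j then
          ((lambar K η i : ℚ) - (lambar K η j : ℚ) - 2 * (δ i : ℚ) + 2 * (δ j : ℚ) +
              (j : ℚ) - (i : ℚ)) /
            ((lambar K η i : ℚ) - (lambar K η j : ℚ) + (j : ℚ) - (i : ℚ))
        else 1))
      = Np K η (fun t => (δ t : ℤ)) / Np K η (fun _ => 0) := by
    intro δ
    unfold Np
    rw [← Finset.prod_div_distrib]
    apply Finset.prod_congr rfl
    intro i _
    rw [← Finset.prod_div_distrib]
    have hIoi : (Finset.Ioi i) = Finset.univ.filter (fun j => i < j) := by
      ext j; simp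
    rw [hIoi, Finset.prod_filter]
    apply Finset.prod_congr rfl
    intro j _
    by_cases h : i < j
    · rw [if_pos h, if_pos h]
      have hnum : ((lambar K η i : ℚ) - (lambar K η j : ℚ) - 2 * (δ i : ℚ) + 2 * (δ j : ℚ) +
              (j : ℚ) - (i : ℚ))
          = ((yv K η (fun t => (δ t : ℤ)) i - yv K η (fun t => (δ t : ℤ)) j : ℤ) : ℚ) := by
        unfold yv
        push_cast
        ring
      have hden : ((lambar K η i : ℚ) - (lambar K η j : ℚ) + (j : ℚ) - (i : ℚ))
          = ((yv K η (fun _ => (0:ℤ)) i - yv K η (fun _ => (0:ℤ)) j : ℤ) : ℚ) := by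
        unfold yv
        push_cast
        ring
      rw [hnum, hden]
    · rw [if_neg h, if_neg h]
  have hsummand : ∀ δ : Fin K → ℕ,
      (Matrix.det (Matrix.of fun i j : Fin K =>
          invFact ((δ j : ℤ) +
            ((lambar K η i : ℤ) - (lambar K η j : ℤ) + (j : ℤ) - (i : ℤ)) / 2))) *
        (∏ i : Fin K, ∏ j : Fin K,
          (if i < j then
            ((lambar K η i : ℚ) - (lambar K η j : ℚ) - 2 * (δ i : ℚ) + 2 * (δ j : ℚ) +
                (j : ℚ) - (i : ℚ)) /
              ((lambar K η i : ℚ) - (lambar K η j : ℚ) + (j : ℚ) - (i : ℚ))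
          else 1))
      = ((Mm K η fun t => (δ t : ℤ)).det * Np K η (fun t => (δ t : ℤ)))
          * (Np K η (fun _ => 0))⁻¹ := by
    intro δ
    rw [hprod δ]
    rw [div_eq_mul_inv]
    rw [show (Matrix.of fun i j : Fin K =>
        invFact ((δ j : ℤ) +
          ((lambar K η i : ℤ) - (lambar K η j : ℤ) + (j : ℤ) - (i : ℤ)) / 2))
      = Mm K η (fun t => (δ t : ℤ)) from rfl]
    ring
  rw [Finset.sum_congr rfl (fun δ _ => hsummand δ), ← Finset.sum_mul, ← mul_assoc,
    central K η r, mul_assoc, mul_inv_cancel₀ (Np_zero_ne K η), mul_one]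
end

section
/- Let s ≥ 1 and let H be a simple graph on the vertex set {1, …, s} with c connected components. Then for every integer N ≥ 1, the number of tuples k = (k_1, …, k_s) ∈ {1, …, N}^s such that for all p ≠ q one has {p,q} an edge of H if and only if |k_p − k_q| ≤ 1, is at most 3^s · N^c. -/
open Finset

attribute [local instance] Classical.propDecidable

lemma aux_dist_pred {V : Type*} (G : SimpleGraph V) {u v : V} (h : G.Reachable u v)
    (hne : u ≠ v) : ∃ w, G.Adj w v ∧ G.dist u w + 1 = G.dist u v := by
  obtain ⟨p, hp⟩ := h.symm.exists_walk_length_eq_dist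
  cases p with
  | nil => exact absurd rfl hne.symm
  | @cons _ w _ hadj q =>
    refine ⟨w, hadj.symm, le_antisymm ?_ ?_⟩
    · have hp' : q.length + 1 = G.dist u v := by
        rw [SimpleGraph.dist_comm]; simpa using hp
      have h2 : G.dist u w ≤ q.reverse.length := G.dist_le _
      simp only [SimpleGraph.Walk.length_reverse] at h2
      omega
    · have hr : G.Reachable u w := ⟨q.reverse⟩
      obtain ⟨r, hr'⟩ := hr.exists_walk_length_eq_dist
      have h3 : G.dist u v ≤ (r.concat hadj.symm).length := G.dist_le _
      simp only [SimpleGraph.Walk.length_concat, hr'] at h3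
      omega

/-- Let `s ≥ 1` and let `H` be a simple graph on `{1, …, s}` with `c` connected components.
For every `N ≥ 1`, the number of tuples `k ∈ {1, …, N}^s` such that for all `p ≠ q`, `{p,q}` is
an edge of `H` iff `|k_p − k_q| ≤ 1`, is at most `3^s · N^c`. -/
theorem stmt15 (s : ℕ) (hs : 1 ≤ s) (H : SimpleGraph (Fin s)) (c : ℕ)
    (hc : c = Fintype.card H.ConnectedComponent) (N : ℕ) (hN : 1 ≤ N) :
    (Finset.univ.filter fun k : Fin s → Fin N =>
        ∀ p q : Fin s, p ≠ q → (H.Adj p q ↔ |((k p : ℤ)) - ((k q : ℤ))| ≤ 1)).card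
      ≤ 3 ^ s * N ^ c := by
  classical
  -- representative of each connected component
  set rep : H.ConnectedComponent → Fin s := fun C => C.out with hrep
  have hrep_mk : ∀ p : Fin s, H.Reachable (rep (H.connectedComponentMk p)) p := by
    intro p
    apply SimpleGraph.ConnectedComponent.exact
    exact Quot.out_eq _
  -- distance to representative
  set d : Fin s → ℕ := fun p => H.dist (rep (H.connectedComponentMk p)) p with hd
  -- parent function
  have hpar : ∀ p : Fin s, ∃ w : Fin s,
      (d p = 0 ∧ w = p) ∨ (d p ≠ 0 ∧ H.Adj w p ∧ d w + 1 = d p) := by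
    intro p
    by_cases h0 : d p = 0
    · exact ⟨p, Or.inl ⟨h0, rfl⟩⟩
    · have hne : rep (H.connectedComponentMk p) ≠ p := by
        intro he
        apply h0
        rw [hd]; simp only; rw [he]
        exact SimpleGraph.dist_self
      obtain ⟨w, hw1, hw2⟩ := aux_dist_pred H (hrep_mk p) hne
      refine ⟨w, Or.inr ⟨h0, hw1, ?_⟩⟩
      have hcc : H.connectedComponentMk w = H.connectedComponentMk p :=
        SimpleGraph.ConnectedComponent.sound hw1.reachable
      rw [hd]; simp only [hcc]
      exact hw2
  choose par hpar using hpar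
  -- properties of the parent
  have hpar0 : ∀ p, d p = 0 → par p = p := by
    intro p h
    rcases hpar p with ⟨_, h'⟩ | ⟨h', _⟩
    · exact h'
    · exact absurd h h'
  have hpar1 : ∀ p, d p ≠ 0 → H.Adj (par p) p ∧ d (par p) + 1 = d p := by
    intro p h
    rcases hpar p with ⟨h', _⟩ | ⟨_, h'⟩
    · exact absurd h' h
    · exact h'
  have hd0 : ∀ p, d p = 0 → rep (H.connectedComponentMk p) = p := by
    intro p h
    have := (SimpleGraph.dist_eq_zero_iff_eq_or_not_reachable).mp h
    rcases this with h' | h'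
    · exact h'
    · exact absurd (hrep_mk p) h'
  -- the set we bound
  set S := (Finset.univ.filter fun k : Fin s → Fin N =>
        ∀ p q : Fin s, p ≠ q → (H.Adj p q ↔ |((k p : ℤ)) - ((k q : ℤ))| ≤ 1)) with hS
  -- key: each valid k yields bounded differences along parent edges
  have hdiff : ∀ k ∈ S, ∀ p : Fin s,
      0 ≤ (k p : ℤ) - (k (par p) : ℤ) + 1 ∧ (k p : ℤ) - (k (par p) : ℤ) + 1 < 3 := by
    intro k hk p
    by_cases h0 : d p = 0
    · rw [hpar0 p h0]; omega
    · obtain ⟨hadj, -⟩ := hpar1 p h0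
      have hne : par p ≠ p := hadj.ne
      rw [hS, Finset.mem_filter] at hk
      have := (hk.2 (par p) p hne).mp hadj
      rw [abs_le] at this
      omega
  -- the injection
  set Φ : (Fin s → Fin N) → (H.ConnectedComponent → Fin N) × (Fin s → Fin 3) :=
    fun k => (fun C => k (rep C),
      fun p => if h : k ∈ S then
        ⟨((k p : ℤ) - (k (par p) : ℤ) + 1).toNat, by
          have := hdiff k h p; omega⟩
      else 0) with hΦ
  have hinj : Set.InjOn Φ S := by
    intro k₁ hk₁ k₂ hk₂ heq
    have hk₁' : (k₁ : Fin s → Fin N) ∈ S := hk₁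
    have hk₂' : (k₂ : Fin s → Fin N) ∈ S := hk₂
    funext p
    -- strong induction on d p
    have key : ∀ n : ℕ, ∀ p : Fin s, d p = n → k₁ p = k₂ p := by
      intro n
      induction n using Nat.strong_induction_on with
      | _ n ih =>
        intro p hp
        by_cases h0 : d p = 0
        · have h1 : rep (H.connectedComponentMk p) = p := hd0 p h0
          have := congrArg Prod.fst heq
          have := congrFun this (H.connectedComponentMk p)
          simpa [hΦ, h1] using this
        · obtain ⟨hadj, hdp⟩ := hpar1 p h0
          have hparent : k₁ (par p) = k₂ (par p) := by
            apply ih (d (par p)) (by omega) (par p) rfl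
          have h2 := congrFun (congrArg Prod.snd heq) p
          simp only [hΦ, dif_pos hk₁', dif_pos hk₂', Fin.mk.injEq] at h2
          have e₁ := hdiff k₁ hk₁' p
          have e₂ := hdiff k₂ hk₂' p
          have h3 : (k₁ p : ℤ) - (k₁ (par p) : ℤ) = (k₂ p : ℤ) - (k₂ (par p) : ℤ) := by
            omega
          rw [hparent] at h3
          have : (k₁ p : ℤ) = (k₂ p : ℤ) := by omega
          exact Fin.ext (by exact_mod_cast this)
        done
      done
    exact key (d p) p rfl
  -- conclude by counting
  calc S.card ≤ Fintype.card ((H.ConnectedComponent → Fin N) × (Fin s → Fin 3)) := by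
        rw [← Finset.card_univ]
        exact Finset.card_le_card_of_injOn Φ (fun k _ => Finset.mem_univ _) hinj
    _ = N ^ c * 3 ^ s := by
        simp [Fintype.card_prod, Fintype.card_fun, hc]
    _ = 3 ^ s * N ^ c := by ring
end
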